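/- arXiv:2312.11483 — 12 statements merged into one kernel-verified Lean document; each statement's English description precedes it below -/
import Mathlib

section
/- Every solution of the plankton–fish system is nonnegative and bounded: if x, y, z : ℝ → ℝ are continuous on [-τmax, ∞), satisfy for all t > 0 the equations x'(t) = r·x(t)·(1 - x(t)/K) - c1·x(t)·y(t), y'(t) = -d1·y(t) + e1·c1·x(t-τ1)·y(t-τ1) - c2·y(t)·z(t), z'(t) = -d2·z(t) + e2·c2·y(t-τ2)·z(t-τ2), and satisfy x(θ) ≥ 0 on [-τ1,0] with x(0) > 0, y(θ) ≥ 0 on [-τmax,0], z(θ) ≥ 0 on [-τ2,0], then there exist constants M1, M2, M3 > 0 such that for all t > 0 one has 0 ≤ x(t) ≤ M1, 0 ≤ y(t) ≤ M2 and 0 ≤ z(t) ≤ M3. -/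
open Set Filter Topology

private lemma mono_aux {u v : ℝ → ℝ} {a b : ℝ} (hab : a ≤ b)
    (hu : ContinuousOn u (Icc a b))
    (hd : ∀ t ∈ Ioo a b, HasDerivAt u (v t) t)
    (hv : ∀ t ∈ Ioo a b, 0 ≤ v t) : u a ≤ u b := by
  have h := monotoneOn_of_deriv_nonneg (convex_Icc a b) hu
    (fun t ht => by
      rw [interior_Icc] at ht
      exact (hd t ht).differentiableAt.differentiableWithinAt)
    (fun t ht => by
      rw [interior_Icc] at ht
      rw [(hd t ht).deriv]
      exact hv t ht)
  exact h (left_mem_Icc.2 hab) (right_mem_Icc.2 hab) hab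

private lemma primitive_hasDerivAt {g : ℝ → ℝ} (hg : Continuous g) (t : ℝ) :
    HasDerivAt (fun u => ∫ s in (0:ℝ)..u, g s) (g t) t :=
  (hg.integral_hasStrictDerivAt 0 t).hasDerivAt

/-- If `f' t ≤ a - b * f t` for `t > 0` with `b > 0`, then `f t ≤ max (f 0) (a / b)`. -/
private lemma bdd_aux {f d : ℝ → ℝ} {a b : ℝ} (hb : 0 < b)
    (hf : ContinuousOn f (Ici 0))
    (hd : ∀ t > (0:ℝ), HasDerivAt f (d t) t)
    (hle : ∀ t > (0:ℝ), d t ≤ a - b * f t) :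
    ∀ t ≥ (0:ℝ), f t ≤ max (f 0) (a / b) := by
  intro T hT
  set C := max (f 0) (a / b) with hC
  rcases hT.eq_or_lt with h0 | h0
  · rw [← h0]; exact le_max_left _ _
  by_contra hcon
  push_neg at hcon
  have hfc : ContinuousOn f (Icc 0 T) := hf.mono (Icc_subset_Ici_self)
  set S := Icc (0:ℝ) T ∩ f ⁻¹' (Iic C) with hS
  have hSne : S.Nonempty := ⟨0, ⟨le_refl 0, h0.le⟩, show f 0 ≤ C from le_max_left _ _⟩
  have hSclosed : IsClosed S := hfc.preimage_isClosed_of_isClosed isClosed_Icc isClosed_Iic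
  have hScompact : IsCompact S :=
    isCompact_Icc.of_isClosed_subset hSclosed inter_subset_left
  have hs0 := hScompact.sSup_mem hSne
  set s0 := sSup S with hs0def
  obtain ⟨⟨hs0T, hs0T'⟩, hfs0⟩ := hs0
  have hfs0' : f s0 ≤ C := hfs0
  have hs0ltT : s0 < T := by
    rcases lt_or_eq_of_le hs0T' with h | h
    · exact h
    · exfalso; rw [h] at hfs0'; exact absurd hfs0' (not_le.2 hcon)
  have hgt : ∀ t ∈ Ioo s0 T, C < f t := by
    intro t ⟨ht1, ht2⟩
    by_contra hh
    push_neg at hh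
    have : t ∈ S := ⟨⟨le_trans hs0T ht1.le, ht2.le⟩, hh⟩
    exact absurd (le_csSup hScompact.bddAbove this) (not_le.2 ht1)
  have hanti : StrictAntiOn f (Icc s0 T) := by
    apply strictAntiOn_of_deriv_neg (convex_Icc s0 T)
      (hf.mono (fun t ht => le_trans hs0T ht.1))
    intro t ht
    rw [interior_Icc] at ht
    have htpos : 0 < t := lt_of_le_of_lt hs0T ht.1
    rw [(hd t htpos).deriv]
    have h1 : a / b < f t := lt_of_le_of_lt (le_max_right _ _) (hgt t ht)
    have h2 : a < b * f t := by
      rwa [div_lt_iff₀ hb, mul_comm] at h1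
    linarith [hle t htpos]
  have : f T < f s0 :=
    hanti (left_mem_Icc.2 hs0ltT.le) (right_mem_Icc.2 hs0ltT.le) hs0ltT
  linarith [hfs0', hcon]

/-- Nonnegativity for delay equations `y' = -g y + c·y(·-τ)` with `c ≥ 0`. -/
private lemma key_nonneg (τ : ℝ) (hτ : 0 ≤ τ) (y g c : ℝ → ℝ)
    (hy : ContinuousOn y (Ici (-τ)))
    (hg : Continuous g) (hcc : Continuous c)
    (hc : ∀ t > (0:ℝ), 0 ≤ c t)
    (hd : ∀ t > (0:ℝ), HasDerivAt y (-(g t) * y t + c t * y (t - τ)) t)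
    (hinit : ∀ s ∈ Icc (-τ) (0:ℝ), 0 ≤ y s) :
    ∀ t ≥ (0:ℝ), 0 ≤ y t := by
  have hy00 : 0 ≤ y 0 := hinit 0 ⟨neg_nonpos.2 hτ, le_refl 0⟩
  by_contra hcon
  push_neg at hcon
  obtain ⟨T, hT0, hTneg⟩ := hcon
  have hT : 0 < T := by
    rcases hT0.eq_or_lt with h | h
    · exfalso; rw [← h] at hTneg; linarith
    · exact h
  rcases hτ.eq_or_lt with hτ0 | hτ0
  · -- no delay: purely linear, use integrating factor on [0, T]
    subst hτ0
    set A : ℝ → ℝ := fun t => ∫ s in (0:ℝ)..t, (g s - c s) with hA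
    have hAd : ∀ t, HasDerivAt A (g t - c t) t :=
      primitive_hasDerivAt (hg.sub hcc)
    set u : ℝ → ℝ := fun t => y t * Real.exp (A t) with hu
    have hucont : ContinuousOn u (Icc 0 T) := by
      apply ContinuousOn.mul
      · exact hy.mono (fun s hs => by simpa using hs.1)
      · have : Differentiable ℝ A := fun t => (hAd t).differentiableAt
        exact (Real.continuous_exp.comp this.continuous).continuousOn
    have hud : ∀ t ∈ Ioo (0:ℝ) T, HasDerivAt u 0 t := by
      intro t ht
      have h1 := (hd t ht.1).mul ((hAd t).exp)
      have : (-(g t) * y t + c t * y (t - 0)) * Real.exp (A t) +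
          y t * (Real.exp (A t) * (g t - c t)) = 0 := by
        rw [sub_zero]; ring
      rwa [this] at h1
    have h01 : u 0 ≤ u T := mono_aux hT.le hucont hud (fun t _ => le_refl 0)
    have hu0 : 0 ≤ u 0 := by
      simp only [hu]
      exact mul_nonneg hy00 (Real.exp_pos _).le
    have huT : u T < 0 :=
      mul_neg_of_neg_of_pos hTneg (Real.exp_pos _)
    linarith
  · -- positive delay
    set S := {t | t ∈ Icc (0:ℝ) T ∧ y t < 0} with hS
    have hSne : S.Nonempty := ⟨T, ⟨hT.le, le_refl T⟩, hTneg⟩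
    have hSbdd : BddBelow S := ⟨0, fun t ht => ht.1.1⟩
    set t0 := sInf S with ht0def
    have ht0lb : ∀ t ∈ S, t0 ≤ t := fun t ht => csInf_le hSbdd ht
    have ht00 : 0 ≤ t0 := le_csInf hSne (fun t ht => ht.1.1)
    have ht0T : t0 ≤ T := ht0lb T ⟨⟨hT.le, le_refl T⟩, hTneg⟩
    -- y ≥ 0 on [0, t0)
    have hpos_before : ∀ s, 0 ≤ s → s < t0 → 0 ≤ y s := by
      intro s hs0 hst0
      by_contra hh
      push_neg at hh
      exact absurd (ht0lb s ⟨⟨hs0, le_trans hst0.le ht0T⟩, hh⟩) (not_le.2 hst0)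
    -- y t0 ≥ 0
    have hyt0 : 0 ≤ y t0 := by
      by_contra hh
      push_neg at hh
      have ht0pos : 0 < t0 := by
        rcases ht00.eq_or_lt with h | h
        · exfalso; rw [← h] at hh; linarith
        · exact h
      have hca : ContinuousAt y t0 :=
        hy.continuousAt (Ici_mem_nhds (by linarith))
      have hev : ∀ᶠ s in 𝓝 t0, y s < 0 := hca.eventually_lt_const hh
      have hev2 : ∀ᶠ s in 𝓝 t0, 0 < s := eventually_gt_nhds ht0pos
      have hev3 : ∀ᶠ s in 𝓝[<] t0, y s < 0 ∧ 0 < s :=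
        nhdsWithin_le_nhds (hev.and hev2)
      obtain ⟨s, hs1, hs2⟩ := (hev3.and self_mem_nhdsWithin).exists
      have : s ∈ S := ⟨⟨hs1.2.le, le_trans hs2.le ht0T⟩, hs1.1⟩
      exact absurd (ht0lb s this) (not_le.2 hs2)
    -- pick t1 ∈ S with t1 < t0 + τ
    obtain ⟨t1, ht1S, ht1lt⟩ := exists_lt_of_csInf_lt hSne
      (show sInf S < t0 + τ by rw [← ht0def]; linarith)
    have ht1neg : y t1 < 0 := ht1S.2
    have ht0t1 : t0 < t1 := by
      rcases (ht0lb t1 ht1S).eq_or_lt with h | h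
      · exfalso; rw [← h] at ht1neg; linarith
      · exact h
    -- integrating factor on [t0, t1]
    set G : ℝ → ℝ := fun t => ∫ s in (0:ℝ)..t, g s with hG
    have hGd : ∀ t, HasDerivAt G (g t) t := primitive_hasDerivAt hg
    set u : ℝ → ℝ := fun t => y t * Real.exp (G t) with hu
    have hucont : ContinuousOn u (Icc t0 t1) := by
      apply ContinuousOn.mul
      · exact hy.mono (fun s hs => le_trans (by linarith) hs.1)
      · have : Differentiable ℝ G := fun t => (hGd t).differentiableAt
        exact (Real.continuous_exp.comp this.continuous).continuousOn
    have hud : ∀ t ∈ Ioo t0 t1, HasDerivAt u (c t * y (t - τ) * Real.exp (G t)) t := by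
      intro t ht
      have htpos : 0 < t := lt_of_le_of_lt ht00 ht.1
      have h1 := (hd t htpos).mul ((hGd t).exp)
      have : (-(g t) * y t + c t * y (t - τ)) * Real.exp (G t) +
          y t * (Real.exp (G t) * g t) = c t * y (t - τ) * Real.exp (G t) := by ring
      rwa [this] at h1
    have hvnn : ∀ t ∈ Ioo t0 t1, 0 ≤ c t * y (t - τ) * Real.exp (G t) := by
      intro t ht
      have htpos : 0 < t := lt_of_le_of_lt ht00 ht.1
      have hytτ : 0 ≤ y (t - τ) := by
        rcases le_or_gt (t - τ) 0 with h | h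
        · exact hinit _ ⟨by linarith, h⟩
        · apply hpos_before _ h.le
          have : t < t0 + τ := lt_trans ht.2 ht1lt
          linarith
      exact mul_nonneg (mul_nonneg (hc t htpos) hytτ) (Real.exp_pos _).le
    have h01 : u t0 ≤ u t1 := mono_aux ht0t1.le hucont hud hvnn
    have hu0 : 0 ≤ u t0 := mul_nonneg hyt0 (Real.exp_pos _).le
    have huT : u t1 < 0 := mul_neg_of_neg_of_pos ht1neg (Real.exp_pos _)
    linarith

/-- Every solution of the plankton–fish system (1) with nonnegative initial data (2)
is nonnegative and bounded on `(0, ∞)`. -/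
theorem plankton_fish_solutions_nonneg_bounded
    (r K d1 d2 c1 c2 e1 e2 τ1 τ2 : ℝ)
    (hr : 0 < r) (hK : 0 < K) (hd1 : 0 < d1) (hd2 : 0 < d2)
    (hc1 : 0 < c1) (hc2 : 0 < c2) (he1 : 0 < e1) (he2 : 0 < e2)
    (hτ1 : 0 ≤ τ1) (hτ2 : 0 ≤ τ2)
    (x y z : ℝ → ℝ)
    (hxc : ContinuousOn x (Set.Ici (-(max τ1 τ2))))
    (hyc : ContinuousOn y (Set.Ici (-(max τ1 τ2))))
    (hzc : ContinuousOn z (Set.Ici (-(max τ1 τ2))))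
    (hx' : ∀ t > (0:ℝ),
      HasDerivAt x (r * x t * (1 - x t / K) - c1 * x t * y t) t)
    (hy' : ∀ t > (0:ℝ),
      HasDerivAt y (-d1 * y t + e1 * c1 * x (t - τ1) * y (t - τ1) - c2 * y t * z t) t)
    (hz' : ∀ t > (0:ℝ),
      HasDerivAt z (-d2 * z t + e2 * c2 * y (t - τ2) * z (t - τ2)) t)
    (hxinit : ∀ θ ∈ Set.Icc (-τ1) (0:ℝ), 0 ≤ x θ) (hxinit0 : 0 < x 0)
    (hyinit : ∀ θ ∈ Set.Icc (-(max τ1 τ2)) (0:ℝ), 0 ≤ y θ)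
    (hzinit : ∀ θ ∈ Set.Icc (-τ2) (0:ℝ), 0 ≤ z θ) :
    ∃ M1 M2 M3 : ℝ, 0 < M1 ∧ 0 < M2 ∧ 0 < M3 ∧
      ∀ t > (0:ℝ), (0 ≤ x t ∧ x t ≤ M1) ∧ (0 ≤ y t ∧ y t ≤ M2) ∧ (0 ≤ z t ∧ z t ≤ M3) := by
  set m := max τ1 τ2 with hmdef
  have hτ1m : τ1 ≤ m := le_max_left _ _
  have hτ2m : τ2 ≤ m := le_max_right _ _
  have hm0 : 0 ≤ m := le_trans hτ1 hτ1m
  have hIci0 : Ici (0:ℝ) ⊆ Ici (-m) := Ici_subset_Ici.2 (by linarith)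
  have hx0c : ContinuousOn x (Ici 0) := hxc.mono hIci0
  have hy0c : ContinuousOn y (Ici 0) := hyc.mono hIci0
  have hz0c : ContinuousOn z (Ici 0) := hzc.mono hIci0
  have hmax : Continuous (fun t : ℝ => max t 0) := continuous_id.max continuous_const
  have hxm : Continuous (fun t : ℝ => x (max t 0)) :=
    hx0c.comp_continuous hmax (fun t => le_max_right t 0)
  have hym : Continuous (fun t : ℝ => y (max t 0)) :=
    hy0c.comp_continuous hmax (fun t => le_max_right t 0)
  have hzm : Continuous (fun t : ℝ => z (max t 0)) :=
    hz0c.comp_continuous hmax (fun t => le_max_right t 0)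
  have hxm1 : Continuous (fun t : ℝ => x (max t 0 - τ1)) :=
    hxc.comp_continuous (hmax.sub continuous_const)
      (fun t => by simp only [mem_Ici]; have := le_max_right t 0; linarith)
  have hym2 : Continuous (fun t : ℝ => y (max t 0 - τ2)) :=
    hyc.comp_continuous (hmax.sub continuous_const)
      (fun t => by simp only [mem_Ici]; have := le_max_right t 0; linarith)
  -- Step 1 : nonnegativity of x
  have hx0 : ∀ t ≥ (0:ℝ), 0 ≤ x t := by
    apply key_nonneg 0 le_rfl x
      (fun t => c1 * y (max t 0) - r + r * x (max t 0) / K) (fun _ => 0)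
    · simpa using hx0c
    · exact ((continuous_const.mul hym).sub continuous_const).add
        ((continuous_const.mul hxm).div_const K)
    · exact continuous_const
    · exact fun t _ => le_rfl
    · intro t ht
      have h := hx' t ht
      have he : -(c1 * y (max t 0) - r + r * x (max t 0) / K) * x t + 0 * x (t - 0)
          = r * x t * (1 - x t / K) - c1 * x t * y t := by
        rw [max_eq_left ht.le]; ring
      rw [he]; exact h
    · intro s hs
      have hs0 : s = 0 := le_antisymm hs.2 (by simpa using hs.1)
      rw [hs0]; exact hxinit0.le
  -- Step 2 : nonnegativity of y
  have hy0 : ∀ t ≥ (0:ℝ), 0 ≤ y t := by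
    apply key_nonneg τ1 hτ1 y
      (fun t => d1 + c2 * z (max t 0)) (fun t => e1 * c1 * x (max t 0 - τ1))
    · exact hyc.mono (Ici_subset_Ici.2 (by linarith))
    · exact continuous_const.add (continuous_const.mul hzm)
    · exact continuous_const.mul hxm1
    · intro t ht
      apply mul_nonneg (by positivity)
      rw [max_eq_left ht.le]
      rcases le_or_gt (t - τ1) 0 with h | h
      · exact hxinit _ ⟨by linarith, h⟩
      · exact hx0 _ h.le
    · intro t ht
      have h := hy' t ht
      have he : -(d1 + c2 * z (max t 0)) * y t + e1 * c1 * x (max t 0 - τ1) * y (t - τ1)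
          = -d1 * y t + e1 * c1 * x (t - τ1) * y (t - τ1) - c2 * y t * z t := by
        rw [max_eq_left ht.le]; ring
      rw [he]; exact h
    · exact fun s hs => hyinit s ⟨by linarith [hs.1], hs.2⟩
  -- Step 3 : nonnegativity of z
  have hz0 : ∀ t ≥ (0:ℝ), 0 ≤ z t := by
    apply key_nonneg τ2 hτ2 z
      (fun _ => d2) (fun t => e2 * c2 * y (max t 0 - τ2))
    · exact hzc.mono (Ici_subset_Ici.2 (by linarith))
    · exact continuous_const
    · exact continuous_const.mul hym2
    · intro t ht
      apply mul_nonneg (by positivity)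
      rw [max_eq_left ht.le]
      rcases le_or_gt (t - τ2) 0 with h | h
      · exact hyinit _ ⟨by linarith, h⟩
      · exact hy0 _ h.le
    · intro t ht
      have h := hz' t ht
      have he : -d2 * z t + e2 * c2 * y (max t 0 - τ2) * z (t - τ2)
          = -d2 * z t + e2 * c2 * y (t - τ2) * z (t - τ2) := by
        rw [max_eq_left ht.le]
      rw [he]; exact h
    · exact hzinit
  -- Step 4 : bound for x
  set M1 := max (x 0) (r * K / r) with hM1def
  have hM1pos : 0 < M1 := lt_max_iff.2 (Or.inl hxinit0)
  have hM1 : ∀ t ≥ (0:ℝ), x t ≤ M1 := by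
    apply bdd_aux hr hx0c hx'
    intro t ht
    have hX := hx0 t ht.le
    have hY := hy0 t ht.le
    have h1 : r * x t * (1 - x t / K) = r * x t - r * (x t) ^ 2 / K := by ring
    have h2 : r * K - 2 * (r * x t) + r * (x t) ^ 2 / K = r * (K - x t) ^ 2 / K := by
      field_simp; ring
    have h3 : 0 ≤ r * (K - x t) ^ 2 / K := by positivity
    have h4 : 0 ≤ c1 * x t * y t := by positivity
    linarith
  -- Step 5 : bound for y
  set W : ℝ → ℝ := fun t => e1 * x t + y (t + τ1) with hWdef
  have hWc : ContinuousOn W (Ici 0) := by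
    apply ContinuousOn.add (continuous_const.continuousOn.mul hx0c)
    apply hyc.comp ((continuous_id.add continuous_const : Continuous fun s : ℝ => s + τ1).continuousOn)
    intro t ht
    simp only [mem_Ici, id_eq, Pi.add_apply] at ht ⊢
    linarith
  have hWd : ∀ t > (0:ℝ), HasDerivAt W
      (e1 * (r * x t * (1 - x t / K) - c1 * x t * y t) +
        (-d1 * y (t + τ1) + e1 * c1 * x ((t + τ1) - τ1) * y ((t + τ1) - τ1)
          - c2 * y (t + τ1) * z (t + τ1))) t := by
    intro t ht
    have h1 := (hx' t ht).const_mul e1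
    have h2 : HasDerivAt (fun s : ℝ => y (s + τ1))
        ((-d1 * y (t + τ1) + e1 * c1 * x ((t + τ1) - τ1) * y ((t + τ1) - τ1)
          - c2 * y (t + τ1) * z (t + τ1)) * 1) t :=
      HasDerivAt.comp t (hy' (t + τ1) (by linarith)) ((hasDerivAt_id t).add_const τ1)
    rw [mul_one] at h2
    exact h1.add h2
  have hWle : ∀ t > (0:ℝ),
      (e1 * (r * x t * (1 - x t / K) - c1 * x t * y t) +
        (-d1 * y (t + τ1) + e1 * c1 * x ((t + τ1) - τ1) * y ((t + τ1) - τ1)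
          - c2 * y (t + τ1) * z (t + τ1)))
      ≤ (e1 * r * K / 4 + d1 * e1 * M1) - d1 * W t := by
    intro t ht
    have h0 : (t + τ1) - τ1 = t := by ring
    rw [h0]
    have hX0 := hx0 t ht.le
    have hXM := hM1 t ht.le
    have hY1 := hy0 (t + τ1) (by linarith)
    have hZ1 := hz0 (t + τ1) (by linarith)
    have hq : x t * (1 - x t / K) ≤ K / 4 := by
      rw [← sub_nonneg]
      have he : K / 4 - x t * (1 - x t / K) = (K - 2 * x t) ^ 2 / (4 * K) := by
        field_simp; ring
      rw [he]; positivity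
    simp only [hWdef]
    nlinarith [mul_le_mul_of_nonneg_left hq (by positivity : (0:ℝ) ≤ e1 * r),
      mul_nonneg (mul_nonneg hc2.le hY1) hZ1,
      mul_nonneg (mul_nonneg hd1.le he1.le) (sub_nonneg.2 hXM)]
  have hWb : ∀ t ≥ (0:ℝ), W t ≤ max (W 0) ((e1 * r * K / 4 + d1 * e1 * M1) / d1) :=
    bdd_aux hd1 hWc hWd hWle
  set C2 := max (W 0) ((e1 * r * K / 4 + d1 * e1 * M1) / d1) with hC2def
  obtain ⟨sy, hsy, hsymax⟩ := isCompact_Icc.exists_isMaxOn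
    (nonempty_Icc.2 (by linarith : -m ≤ τ1)) (hyc.mono (fun s hs => hs.1))
  have hsymax' : ∀ s ∈ Icc (-m) τ1, y s ≤ y sy := isMaxOn_iff.1 hsymax
  have hBy0 : 0 ≤ y sy :=
    le_trans (hyinit 0 ⟨by linarith, le_rfl⟩) (hsymax' 0 ⟨by linarith, hτ1⟩)
  set M2 := max C2 (y sy) + 1 with hM2def
  have hM2pos : 0 < M2 := by
    have : 0 ≤ max C2 (y sy) := le_trans hBy0 (le_max_right _ _)
    linarith
  have hyb : ∀ s ≥ -τ1, y s ≤ M2 := by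
    intro s hs
    rcases le_or_gt s τ1 with h | h
    · have h1 : y s ≤ y sy := hsymax' s ⟨by linarith, h⟩
      have h2 : y sy ≤ max C2 (y sy) := le_max_right _ _
      linarith
    · have h1 : (0:ℝ) ≤ s - τ1 := by linarith
      have h2 := hWb (s - τ1) h1
      have h3 : W (s - τ1) = e1 * x (s - τ1) + y s := by
        simp only [hWdef]
        have : s - τ1 + τ1 = s := by ring
        rw [this]
      have h4 : 0 ≤ e1 * x (s - τ1) := mul_nonneg he1.le (hx0 _ h1)
      have h5 : C2 ≤ max C2 (y sy) := le_max_left _ _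
      rw [h3] at h2
      linarith
  -- bounds for x and y on delayed arguments
  obtain ⟨sx, hsx, hsxmax⟩ := isCompact_Icc.exists_isMaxOn
    (nonempty_Icc.2 (by linarith : -m ≤ (0:ℝ))) (hxc.mono (fun s hs => hs.1))
  have hsxmax' : ∀ s ∈ Icc (-m) (0:ℝ), x s ≤ x sx := isMaxOn_iff.1 hsxmax
  set Mx := max M1 (x sx) with hMxdef
  have hMx0 : 0 ≤ Mx := le_trans hM1pos.le (le_max_left _ _)
  have hxb : ∀ s ≥ -τ1, x s ≤ Mx := by
    intro s hs
    rcases le_or_gt s 0 with h | h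
    · exact le_trans (hsxmax' s ⟨by linarith, h⟩) (le_max_right _ _)
    · exact le_trans (hM1 s h.le) (le_max_left _ _)
  have hxnn : ∀ s ≥ -τ1, 0 ≤ x s := by
    intro s hs
    rcases le_or_gt s 0 with h | h
    · exact hxinit s ⟨hs, h⟩
    · exact hx0 s h.le
  have hynn : ∀ s ≥ -τ1, 0 ≤ y s := by
    intro s hs
    rcases le_or_gt s 0 with h | h
    · exact hyinit s ⟨by linarith, h⟩
    · exact hy0 s h.le
  -- Step 6 : bound for z
  set U : ℝ → ℝ := fun t => e2 * y t + z (t + τ2) with hUdef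
  have hUc : ContinuousOn U (Ici 0) := by
    apply ContinuousOn.add (continuous_const.continuousOn.mul hy0c)
    apply hzc.comp ((continuous_id.add continuous_const : Continuous fun s : ℝ => s + τ2).continuousOn)
    intro t ht
    simp only [mem_Ici, id_eq, Pi.add_apply] at ht ⊢
    linarith
  have hUd : ∀ t > (0:ℝ), HasDerivAt U
      (e2 * (-d1 * y t + e1 * c1 * x (t - τ1) * y (t - τ1) - c2 * y t * z t) +
        (-d2 * z (t + τ2) + e2 * c2 * y ((t + τ2) - τ2) * z ((t + τ2) - τ2))) t := by
    intro t ht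
    have h1 := (hy' t ht).const_mul e2
    have h2 : HasDerivAt (fun s : ℝ => z (s + τ2))
        ((-d2 * z (t + τ2) + e2 * c2 * y ((t + τ2) - τ2) * z ((t + τ2) - τ2)) * 1) t :=
      HasDerivAt.comp t (hz' (t + τ2) (by linarith)) ((hasDerivAt_id t).add_const τ2)
    rw [mul_one] at h2
    exact h1.add h2
  have hUle : ∀ t > (0:ℝ),
      (e2 * (-d1 * y t + e1 * c1 * x (t - τ1) * y (t - τ1) - c2 * y t * z t) +
        (-d2 * z (t + τ2) + e2 * c2 * y ((t + τ2) - τ2) * z ((t + τ2) - τ2)))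
      ≤ (e2 * e1 * c1 * Mx * M2 + d2 * e2 * M2) - d2 * U t := by
    intro t ht
    have h0 : (t + τ2) - τ2 = t := by ring
    rw [h0]
    have hY := hy0 t ht.le
    have hYM := hyb t (by linarith)
    have hX1nn := hxnn (t - τ1) (by linarith)
    have hX1b := hxb (t - τ1) (by linarith)
    have hYdnn := hynn (t - τ1) (by linarith)
    have hYdb := hyb (t - τ1) (by linarith)
    have hprod : x (t - τ1) * y (t - τ1) ≤ Mx * M2 := mul_le_mul hX1b hYdb hYdnn hMx0
    simp only [hUdef]
    nlinarith [mul_le_mul_of_nonneg_left hprod (by positivity : (0:ℝ) ≤ e2 * e1 * c1),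
      mul_nonneg (mul_nonneg hd2.le he2.le) (sub_nonneg.2 hYM),
      mul_nonneg (mul_nonneg he2.le hd1.le) hY]
  have hUb : ∀ t ≥ (0:ℝ), U t ≤ max (U 0) ((e2 * e1 * c1 * Mx * M2 + d2 * e2 * M2) / d2) :=
    bdd_aux hd2 hUc hUd hUle
  set C3 := max (U 0) ((e2 * e1 * c1 * Mx * M2 + d2 * e2 * M2) / d2) with hC3def
  obtain ⟨sz, hsz, hszmax⟩ := isCompact_Icc.exists_isMaxOn
    (nonempty_Icc.2 (by linarith : -m ≤ τ2)) (hzc.mono (fun s hs => hs.1))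
  have hszmax' : ∀ s ∈ Icc (-m) τ2, z s ≤ z sz := isMaxOn_iff.1 hszmax
  have hBz0 : 0 ≤ z sz :=
    le_trans (hzinit 0 ⟨by linarith, le_rfl⟩) (hszmax' 0 ⟨by linarith, hτ2⟩)
  set M3 := max C3 (z sz) + 1 with hM3def
  have hM3pos : 0 < M3 := by
    have : 0 ≤ max C3 (z sz) := le_trans hBz0 (le_max_right _ _)
    linarith
  have hzb : ∀ t > (0:ℝ), z t ≤ M3 := by
    intro t ht
    rcases le_or_gt t τ2 with h | h
    · have h1 : z t ≤ z sz := hszmax' t ⟨by linarith, h⟩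
      have h2 : z sz ≤ max C3 (z sz) := le_max_right _ _
      linarith
    · have h1 : (0:ℝ) ≤ t - τ2 := by linarith
      have h2 := hUb (t - τ2) h1
      have h3 : U (t - τ2) = e2 * y (t - τ2) + z t := by
        simp only [hUdef]
        have : t - τ2 + τ2 = t := by ring
        rw [this]
      have h4 : 0 ≤ e2 * y (t - τ2) := mul_nonneg he2.le (hy0 _ h1)
      have h5 : C3 ≤ max C3 (z sz) := le_max_left _ _
      rw [h3] at h2
      linarith
  exact ⟨M1, M2, M3, hM1pos, hM2pos, hM3pos, fun t ht =>
    ⟨⟨hx0 t ht.le, hM1 t ht.le⟩, ⟨hy0 t ht.le, hyb t (by linarith)⟩,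
      ⟨hz0 t ht.le, hzb t ht⟩⟩⟩
end

section
/- Classification of nonnegative equilibria, case 1: assume d1 ≥ e1·c1·K. A point (x̄, ȳ, z̄) ∈ ℝ³ with x̄, ȳ, z̄ ≥ 0 satisfies the equilibrium equations r·x̄·(1 - x̄/K) - c1·x̄·ȳ = 0, -d1·ȳ + e1·c1·x̄·ȳ - c2·ȳ·z̄ = 0, -d2·z̄ + e2·c2·ȳ·z̄ = 0 if and only if (x̄, ȳ, z̄) = (0,0,0) or (x̄, ȳ, z̄) = (K,0,0). -/
/-- Classification of nonnegative equilibria of the plankton–fish system (1), case 1: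
if `d1 ≥ e1 c1 K` then the only nonnegative equilibria are `(0,0,0)` and `(K,0,0)`. -/
theorem plankton_fish_equilibria_case1
    (r K d1 d2 c1 c2 e1 e2 : ℝ)
    (hr : 0 < r) (hK : 0 < K) (hd1 : 0 < d1) (hd2 : 0 < d2)
    (hc1 : 0 < c1) (hc2 : 0 < c2) (he1 : 0 < e1) (he2 : 0 < e2)
    (hcase : e1 * c1 * K ≤ d1)
    (xb yb zb : ℝ) (hx : 0 ≤ xb) (hy : 0 ≤ yb) (hz : 0 ≤ zb) :
    (r * xb * (1 - xb / K) - c1 * xb * yb = 0 ∧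
     -d1 * yb + e1 * c1 * xb * yb - c2 * yb * zb = 0 ∧
     -d2 * zb + e2 * c2 * yb * zb = 0)
    ↔ ((xb, yb, zb) = ((0:ℝ), (0:ℝ), (0:ℝ)) ∨ (xb, yb, zb) = (K, (0:ℝ), (0:ℝ))) := by
  constructor
  · rintro ⟨h1, h2, h3⟩
    -- first show yb = 0
    have hy0 : yb = 0 := by
      by_contra hyne
      have hypos : 0 < yb := lt_of_le_of_ne hy (Ne.symm hyne)
      -- from eq2: e1*c1*xb = d1 + c2*zb
      have h2' : yb * (-d1 + e1 * c1 * xb - c2 * zb) = 0 := by ring_nf; linarith [h2]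
      have h2'' : -d1 + e1 * c1 * xb - c2 * zb = 0 := by
        rcases mul_eq_zero.mp h2' with h | h
        · exact absurd h hyne
        · exact h
      have hxK : e1 * c1 * xb = d1 + c2 * zb := by linarith
      have hge : e1 * c1 * K ≤ e1 * c1 * xb := by nlinarith [mul_nonneg hc2.le hz]
      have hxgeK : K ≤ xb := by
        have := mul_pos he1 hc1
        nlinarith
      -- xb > 0, so from eq1: r*(1 - xb/K) = c1*yb > 0, hence xb < K
      have hxpos : 0 < xb := lt_of_lt_of_le hK hxgeK
      have h1' : xb * (r * (1 - xb / K) - c1 * yb) = 0 := by ring_nf; ring_nf at h1; linarith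
      have h1'' : r * (1 - xb / K) - c1 * yb = 0 := by
        rcases mul_eq_zero.mp h1' with h | h
        · exact absurd h (ne_of_gt hxpos)
        · exact h
      have hxK' : xb / K ≥ 1 := by
        rw [ge_iff_le, le_div_iff₀ hK]; linarith
      nlinarith [mul_pos hc1 hypos]
    subst hy0
    -- eq3 gives zb = 0
    have hz0 : zb = 0 := by
      have : -d2 * zb = 0 := by linarith [h3]
      rcases mul_eq_zero.mp this with h | h
      · exfalso; linarith
      · exact h
    subst hz0
    -- eq1 gives xb = 0 or xb = K
    have h1' : r * xb * (1 - xb / K) = 0 := by linarith [h1]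
    rcases mul_eq_zero.mp h1' with h | h
    · rcases mul_eq_zero.mp h with h' | h'
      · exact absurd h' (ne_of_gt hr)
      · left; simp [h']
    · right
      have : xb = K := by
        have hK' : (K:ℝ) ≠ 0 := ne_of_gt hK
        field_simp at h
        linarith
      simp [this]
  · rintro (h | h) <;>
      (injection h with h1 h2; injection h2 with h2 h3; subst h1; subst h2; subst h3;
       exact ⟨by field_simp; ring, by ring, by ring⟩)
end

section
/- Classification of nonnegative equilibria, case 2: assume e1·c1·K·(1 - c1·d2/(e2·c2·r)) ≤ d1 < e1·c1·K. A point (x̄, ȳ, z̄) ∈ ℝ³ with x̄, ȳ, z̄ ≥ 0 satisfies the equilibrium equations r·x̄·(1 - x̄/K) - c1·x̄·ȳ = 0, -d1·ȳ + e1·c1·x̄·ȳ - c2·ȳ·z̄ = 0, -d2·z̄ + e2·c2·ȳ·z̄ = 0 if and only if (x̄, ȳ, z̄) ∈ { (0,0,0), (K,0,0), (x0, y0, 0) }, where x0 = d1/(e1·c1) and y0 = (r/c1)·(1 - d1/(e1·c1·K)). -/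
/-- Classification of nonnegative equilibria of the plankton–fish system (1), case 2:
if `e1 c1 K (1 - c1 d2/(e2 c2 r)) ≤ d1 < e1 c1 K` then the nonnegative equilibria are
exactly `(0,0,0)`, `(K,0,0)` and `(x0, y0, 0)`. -/
theorem plankton_fish_equilibria_case2
    (r K d1 d2 c1 c2 e1 e2 x0 y0 : ℝ)
    (hr : 0 < r) (hK : 0 < K) (hd1 : 0 < d1) (hd2 : 0 < d2)
    (hc1 : 0 < c1) (hc2 : 0 < c2) (he1 : 0 < e1) (he2 : 0 < e2)
    (hx0 : x0 = d1 / (e1 * c1))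
    (hy0 : y0 = r / c1 * (1 - d1 / (e1 * c1 * K)))
    (hcase1 : e1 * c1 * K * (1 - c1 * d2 / (e2 * c2 * r)) ≤ d1)
    (hcase2 : d1 < e1 * c1 * K)
    (xb yb zb : ℝ) (hx : 0 ≤ xb) (hy : 0 ≤ yb) (hz : 0 ≤ zb) :
    (r * xb * (1 - xb / K) - c1 * xb * yb = 0 ∧
     -d1 * yb + e1 * c1 * xb * yb - c2 * yb * zb = 0 ∧
     -d2 * zb + e2 * c2 * yb * zb = 0)
    ↔ (xb, yb, zb) ∈ ({((0:ℝ), (0:ℝ), (0:ℝ)), (K, 0, 0), (x0, y0, 0)} : Set (ℝ × ℝ × ℝ)) := by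
  have hK' : K ≠ 0 := ne_of_gt hK
  have hec : 0 < e1 * c1 := mul_pos he1 hc1
  have hec2 : 0 < e2 * c2 := mul_pos he2 hc2
  have hecr : 0 < e2 * c2 * r := mul_pos hec2 hr
  constructor
  · rintro ⟨h1, h2, h3⟩
    -- first show zb = 0
    have hzb : zb = 0 := by
      by_contra hzb
      have hzpos : 0 < zb := lt_of_le_of_ne hz (Ne.symm hzb)
      have hyb : e2 * c2 * yb = d2 := by
        have h : zb * (e2 * c2 * yb - d2) = 0 := by linear_combination h3
        rcases mul_eq_zero.mp h with h | h
        · exact absurd h hzb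
        · linarith
      have hypos : 0 < yb := by
        have : 0 < e2 * c2 * yb := by rw [hyb]; exact hd2
        nlinarith
      have hxpos : 0 < xb := by
        rcases hx.lt_or_eq with h | h
        · exact h
        · exfalso; rw [← h] at h2
          nlinarith [mul_pos hd1 hypos, mul_pos (mul_pos hc2 hypos) hzpos]
      have he1' : r * (1 - xb / K) = c1 * yb := by
        have h : xb * (r * (1 - xb / K) - c1 * yb) = 0 := by linear_combination h1
        rcases mul_eq_zero.mp h with h | h
        · exact absurd h (ne_of_gt hxpos)
        · linarith
      have he2' : e1 * c1 * xb = d1 + c2 * zb := by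
        have h : yb * (e1 * c1 * xb - d1 - c2 * zb) = 0 := by linear_combination h2
        rcases mul_eq_zero.mp h with h | h
        · exact absurd h (ne_of_gt hypos)
        · linarith
      -- clear denominators in he1' and hcase1
      have he1K : r * K - r * xb = c1 * yb * K := by
        have h := congrArg (· * K) he1'
        calc r * K - r * xb = r * (1 - xb / K) * K := by field_simp
          _ = c1 * yb * K := h
      have hc1'' : e1 * c1 * K * (e2 * c2 * r) - e1 * c1 * K * (c1 * d2) ≤ d1 * (e2 * c2 * r) := by
        have h := mul_le_mul_of_nonneg_right hcase1 (le_of_lt hecr)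
        have heq : e1 * c1 * K * (1 - c1 * d2 / (e2 * c2 * r)) * (e2 * c2 * r)
            = e1 * c1 * K * (e2 * c2 * r) - e1 * c1 * K * (c1 * d2) := by
          field_simp
        linarith [heq ▸ h]
      have hA : e2 * c2 * (e1 * c1 * (r * K - r * xb)) = e2 * c2 * (e1 * c1 * (c1 * yb * K)) := by
        rw [he1K]
      have hB : e1 * c1 * K * c1 * (e2 * c2 * yb) = e1 * c1 * K * c1 * d2 := by rw [hyb]
      have h7 : e1 * c1 * xb * (e2 * c2 * r) ≤ d1 * (e2 * c2 * r) := by linarith [hc1'', hA, hB]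
      have hkey : e1 * c1 * xb ≤ d1 := le_of_mul_le_mul_right h7 hecr
      nlinarith [mul_pos hc2 hzpos]
    subst hzb
    simp only [Set.mem_insert_iff, Set.mem_singleton_iff, Prod.mk.injEq]
    have h2' : yb = 0 ∨ e1 * c1 * xb = d1 := by
      have h : yb * (e1 * c1 * xb - d1) = 0 := by linear_combination h2
      rcases mul_eq_zero.mp h with h | h
      · exact Or.inl h
      · exact Or.inr (by linarith)
    have h1' : xb = 0 ∨ r * (1 - xb / K) = c1 * yb := by
      have h : xb * (r * (1 - xb / K) - c1 * yb) = 0 := by linear_combination h1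
      rcases mul_eq_zero.mp h with h | h
      · exact Or.inl h
      · exact Or.inr (by linarith)
    rcases h1' with hxz | he1'
    · subst hxz
      rcases h2' with hyz | habs
      · exact Or.inl ⟨rfl, hyz, trivial⟩
      · exfalso; norm_num at habs; linarith
    · rcases h2' with hyz | hxeq
      · subst hyz
        right; left
        refine ⟨?_, rfl, trivial⟩
        have h0 : r * (1 - xb / K) = 0 := by simpa using he1'
        have h0' : 1 - xb / K = 0 := by
          rcases mul_eq_zero.mp h0 with h | h
          · exact absurd h (ne_of_gt hr)
          · exact h
        field_simp at h0'
        linarith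
      · right; right
        have hxv : xb = x0 := by
          rw [hx0, eq_div_iff (ne_of_gt hec)]; linarith [hxeq]
        refine ⟨hxv, ?_, trivial⟩
        rw [hy0]
        have hxd : d1 / (e1 * c1 * K) = xb / K := by
          rw [← hxeq]; field_simp
        rw [hxd]
        have hc1' : c1 ≠ 0 := ne_of_gt hc1
        have hcy : c1 * (r / c1 * (1 - xb / K)) = r * (1 - xb / K) := by field_simp
        exact mul_left_cancel₀ hc1' (by rw [hcy]; exact he1'.symm)
  · intro hmem
    simp only [Set.mem_insert_iff, Set.mem_singleton_iff, Prod.mk.injEq] at hmem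
    rcases hmem with ⟨h1, h2, h3⟩ | ⟨h1, h2, h3⟩ | ⟨h1, h2, h3⟩ <;> subst h1 <;> subst h2 <;> subst h3
    · norm_num
    · refine ⟨by field_simp; ring, by ring, by ring⟩
    · have hA : e1 * c1 * xb = d1 := by rw [hx0]; field_simp
      have hB : c1 * yb = r * (1 - xb / K) := by
        rw [hy0, hx0]; field_simp
      refine ⟨by linear_combination (-xb) * hB, by linear_combination yb * hA, by ring⟩
end

section
/- Let d > 0, τ ≥ 0 and 0 ≤ a < d be real numbers. Then for every λ ∈ ℂ with Re λ ≥ 0 one has λ + d - a·exp(-λ·τ) ≠ 0, i.e. all roots of the quasi-polynomial Q2(λ) = λ + d - a·e^{-λτ} lie in the open left half-plane. -/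
/-- If `0 ≤ a < d` and `τ ≥ 0`, all roots of the quasi-polynomial
`Q2(λ) = λ + d - a e^{-λτ}` lie in the open left half-plane. -/
theorem quasiPolynomial_roots_left_halfplane
    (d τ a : ℝ) (hd : 0 < d) (hτ : 0 ≤ τ) (ha : 0 ≤ a) (had : a < d) :
    ∀ lam : ℂ, 0 ≤ lam.re →
      lam + (d : ℂ) - (a : ℂ) * Complex.exp (-lam * (τ : ℂ)) ≠ 0 := by
  intro lam hre h
  have heq : lam + (d : ℂ) = (a : ℂ) * Complex.exp (-lam * (τ : ℂ)) := by
    linear_combination h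
  have h1 : ‖lam + (d : ℂ)‖ ≥ d := by
    calc ‖lam + (d : ℂ)‖ ≥ (lam + (d : ℂ)).re := Complex.re_le_norm _
      _ = lam.re + d := by simp
      _ ≥ d := by linarith
  have h2 : ‖(a : ℂ) * Complex.exp (-lam * (τ : ℂ))‖ ≤ a := by
    rw [norm_mul, Complex.norm_exp]
    have hre' : (-lam * (τ : ℂ)).re = -lam.re * τ := by simp
    rw [hre']
    have hexp : Real.exp (-lam.re * τ) ≤ 1 := by
      apply Real.exp_le_one_iff.2
      nlinarith
    calc ‖(a : ℂ)‖ * Real.exp (-lam.re * τ)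
        ≤ ‖(a : ℂ)‖ * 1 := by
          exact mul_le_mul_of_nonneg_left hexp (by positivity)
      _ = |a| := by simp
      _ = a := abs_of_nonneg ha
  rw [heq] at h1
  linarith
end

section
/- Let p > 0, d > 0, τ ≥ 0 and c be real numbers with 0 < c < 2p. Then for every λ ∈ ℂ with Re λ ≥ 0 one has Q3(λ) = λ + d - d·e^{-λτ}·(1 - c/(λ + p)) ≠ 0; i.e. all roots of the quasi-polynomial Q3 lie in the open left half-plane. (Note that λ + p ≠ 0 whenever Re λ ≥ 0, so Q3(λ) is well defined there.) -/
/-- If `p > 0`, `d > 0`, `τ ≥ 0` and `0 < c < 2p`, then all roots of the quasi-polynomial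
`Q3(λ) = λ + d - d e^{-λτ} (1 - c/(λ + p))` lie in the open left half-plane. -/
theorem quasiPolynomial_Q3_roots_left_halfplane
    (p d τ c : ℝ) (hp : 0 < p) (hd : 0 < d) (hτ : 0 ≤ τ)
    (hc0 : 0 < c) (hc2 : c < 2 * p) :
    ∀ lam : ℂ, 0 ≤ lam.re →
      lam + (d : ℂ) - (d : ℂ) * Complex.exp (-lam * (τ : ℂ)) *
        (1 - (c : ℂ) / (lam + (p : ℂ))) ≠ 0 := by
  intro lam hre h
  have hzpre : 0 < (lam + (p : ℂ)).re := by
    simp [Complex.add_re]; linarith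
  have hzp : (lam + (p : ℂ)) ≠ 0 := by
    intro h0
    rw [h0] at hzpre
    simp at hzpre
  -- |λ+p-c| < |λ+p|
  have habs1 : ‖lam + (p : ℂ) - (c : ℂ)‖ < ‖lam + (p : ℂ)‖ := by
    have h1 : Complex.normSq (lam + (p : ℂ) - (c : ℂ)) < Complex.normSq (lam + (p : ℂ)) := by
      simp [Complex.normSq_apply, Complex.add_re, Complex.sub_re, Complex.add_im,
        Complex.sub_im]
      nlinarith [hre, hc0, hc2]
    have := Real.sqrt_lt_sqrt (Complex.normSq_nonneg _) h1
    simpa [Complex.norm_def] using this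
  -- |1 - c/(λ+p)| < 1
  have hF : ‖1 - (c : ℂ) / (lam + (p : ℂ))‖ < 1 := by
    have heq : 1 - (c : ℂ) / (lam + (p : ℂ)) = (lam + (p : ℂ) - (c : ℂ)) / (lam + (p : ℂ)) := by
      field_simp
    rw [heq, norm_div, div_lt_one (norm_pos_iff.mpr hzp)]
    exact habs1
  -- |exp(-λτ)| ≤ 1
  have hE : ‖Complex.exp (-lam * (τ : ℂ))‖ ≤ 1 := by
    rw [Complex.norm_exp]
    apply Real.exp_le_one_iff.mpr
    simp [Complex.mul_re]
    nlinarith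
  -- d ≤ |λ+d|
  have hld : (d : ℝ) ≤ ‖lam + (d : ℂ)‖ := by
    have h2 : (d : ℝ) ≤ (lam + (d : ℂ)).re := by
      simp [Complex.add_re]; linarith
    exact h2.trans (Complex.re_le_norm _)
  -- derive contradiction
  have heq : lam + (d : ℂ) = (d : ℂ) * Complex.exp (-lam * (τ : ℂ)) *
      (1 - (c : ℂ) / (lam + (p : ℂ))) := by
    linear_combination h
  have hlt : ‖lam + (d : ℂ)‖ < d := by
    rw [heq]
    calc ‖(d : ℂ) * Complex.exp (-lam * (τ : ℂ)) *
        (1 - (c : ℂ) / (lam + (p : ℂ)))‖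
        = d * (‖Complex.exp (-lam * (τ : ℂ))‖ *
            ‖1 - (c : ℂ) / (lam + (p : ℂ))‖) := by
          rw [norm_mul, norm_mul, Complex.norm_real, Real.norm_eq_abs, abs_of_pos hd, mul_assoc]
      _ < d * 1 := by
          apply mul_lt_mul_of_pos_left _ hd
          calc ‖Complex.exp (-lam * (τ : ℂ))‖ *
              ‖1 - (c : ℂ) / (lam + (p : ℂ))‖
              ≤ 1 * ‖1 - (c : ℂ) / (lam + (p : ℂ))‖ :=
                mul_le_mul_of_nonneg_right hE (norm_nonneg _)
            _ = ‖1 - (c : ℂ) / (lam + (p : ℂ))‖ := one_mul _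
            _ < 1 := hF
      _ = d := mul_one d
  linarith
end

section
/- (Lemma, part 1, characteristic-root form.) Let r, K, d1, d2, c1, c2, e1, e2 > 0 and τ1, τ2 ≥ 0 satisfy e1·c1·K·max{1/3, 1 - c1·d2/(e2·c2·r)} < d1 < e1·c1·K, and set x0 = d1/(e1·c1), y0 = (r/c1)·(1 - d1/(e1·c1·K)). Then for every λ ∈ ℂ with Re λ ≥ 0 the characteristic quasi-polynomial Q(λ) = Q1(λ)·Q2(λ) is nonzero, where Q1(λ) = (λ + (r/K)·x0)·(λ + d1 - d1·e^{-λτ1}) + c1·d1·y0·e^{-λτ1} and Q2(λ) = λ + d2 - e2·c2·y0·e^{-λτ2}; i.e. all characteristic roots of the linearization of system (1) at (x0, y0, 0) lie in the open left half-plane. -/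
set_option maxHeartbeats 1000000 in
/-- Lemma, part 1 (characteristic-root form): under condition (12),
all roots of the characteristic quasi-polynomial `Q = Q1 ⬝ Q2` of the linearization
of system (1) at `(x0, y0, 0)` lie in the open left half-plane. -/

theorem charPoly_roots_left_halfplane
    (r K d1 d2 c1 c2 e1 e2 τ1 τ2 x0 y0 : ℝ)
    (hr : 0 < r) (hK : 0 < K) (hd1 : 0 < d1) (hd2 : 0 < d2)
    (hc1 : 0 < c1) (hc2 : 0 < c2) (he1 : 0 < e1) (he2 : 0 < e2)
    (hτ1 : 0 ≤ τ1) (hτ2 : 0 ≤ τ2)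
    (hx0 : x0 = d1 / (e1 * c1))
    (hy0 : y0 = r / c1 * (1 - d1 / (e1 * c1 * K)))
    (hlow : e1 * c1 * K * max (1 / 3) (1 - c1 * d2 / (e2 * c2 * r)) < d1)
    (hhigh : d1 < e1 * c1 * K) :
    ∀ lam : ℂ, 0 ≤ lam.re →
      ((lam + ((r / K * x0 : ℝ) : ℂ)) *
          (lam + (d1 : ℂ) - (d1 : ℂ) * Complex.exp (-lam * (τ1 : ℂ)))
        + ((c1 * d1 * y0 : ℝ) : ℂ) * Complex.exp (-lam * (τ1 : ℂ))) *
      (lam + (d2 : ℂ) - ((e2 * c2 * y0 : ℝ) : ℂ) * Complex.exp (-lam * (τ2 : ℂ))) ≠ 0 := by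
  intro lam hre
  have hP : 0 < e1 * c1 * K := by positivity
  have hy0pos : 0 < y0 := by
    have h1 : d1 / (e1 * c1 * K) < 1 := (div_lt_one hP).2 hhigh
    have h2 : 0 < r / c1 := by positivity
    rw [hy0]; nlinarith
  -- e2*c2*y0 < d2
  have hmax2 : e1 * c1 * K * (1 - c1 * d2 / (e2 * c2 * r)) < d1 :=
    lt_of_le_of_lt (by gcongr; exact le_max_right _ _) hlow
  have hk2 : e2 * c2 * y0 < d2 := by
    rw [hy0]
    have he2c2r : (0:ℝ) < e2 * c2 * r := by positivity
    have hmax2' : e1 * c1 * K * (e2 * c2 * r) - e1 * c1 * K * (c1 * d2) < d1 * (e2 * c2 * r) := by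
      have h := mul_lt_mul_of_pos_right hmax2 he2c2r
      have hexpand : e1 * c1 * K * (1 - c1 * d2 / (e2 * c2 * r)) * (e2 * c2 * r)
          = e1 * c1 * K * (e2 * c2 * r) - e1 * c1 * K * (c1 * d2) := by
        field_simp
      linarith [hexpand ▸ h]
    have key : e2 * c2 * (r / c1 * (1 - d1 / (e1 * c1 * K)))
        = (e2 * c2 * r * (e1 * c1 * K - d1)) / (c1 * (e1 * c1 * K)) := by
      field_simp
    rw [key, div_lt_iff₀ (by positivity : (0:ℝ) < c1 * (e1 * c1 * K))]
    nlinarith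
  -- a + c > 0 and a - c > 0 where a = r/K*x0, c = a - c1*y0
  have hmax1 : e1 * c1 * K * (1 / 3) < d1 :=
    lt_of_le_of_lt (by gcongr; exact le_max_left _ _) hlow
  have hsum : 0 < 2 * (r / K * x0) - c1 * y0 := by
    rw [hx0, hy0]
    have key : 2 * (r / K * (d1 / (e1 * c1))) - c1 * (r / c1 * (1 - d1 / (e1 * c1 * K)))
        = r * (3 * d1 - e1 * c1 * K) / (e1 * c1 * K) := by
      field_simp
      ring
    rw [key]
    apply div_pos _ hP
    nlinarith
  have ha : 0 < r / K * x0 := by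
    rw [hx0]; positivity
  intro h
  rcases mul_eq_zero.mp h with h1 | h2
  · -- Q1 = 0
    have key : (lam + ((r / K * x0 : ℝ) : ℂ)) * (lam + (d1 : ℂ))
        = (d1 : ℂ) * (lam + ((r / K * x0 - c1 * y0 : ℝ) : ℂ)) * Complex.exp (-lam * (τ1 : ℂ)) := by
      push_cast
      push_cast at h1
      linear_combination h1
    have hE : ‖Complex.exp (-lam * (τ1 : ℂ))‖ ≤ 1 := by
      rw [Complex.norm_exp]
      have : (-lam * (τ1 : ℂ)).re = -(lam.re * τ1) := by
        simp [Complex.mul_re]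
      rw [this]
      exact Real.exp_le_one_iff.2 (by nlinarith)
    have hEn : 0 ≤ ‖Complex.exp (-lam * (τ1 : ℂ))‖ := norm_nonneg _
    have habs := congrArg (norm : ℂ → ℝ) key
    rw [norm_mul, norm_mul, norm_mul] at habs
    have hd1abs : ‖((d1:ℝ) : ℂ)‖ = d1 := by
      rw [Complex.norm_real, Real.norm_eq_abs, abs_of_pos hd1]
    rw [hd1abs] at habs
    have hrd : d1 ≤ ‖lam + (d1 : ℂ)‖ := by
      have := Complex.re_le_norm (lam + (d1 : ℂ))
      simp only [Complex.add_re, Complex.ofReal_re] at this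
      linarith
    have hca : ‖lam + ((r / K * x0 - c1 * y0 : ℝ) : ℂ)‖
        < ‖lam + ((r / K * x0 : ℝ) : ℂ)‖ := by
      have hsq : (‖lam + ((r / K * x0 - c1 * y0 : ℝ) : ℂ)‖)^2
          < (‖lam + ((r / K * x0 : ℝ) : ℂ)‖)^2 := by
        rw [Complex.sq_norm, Complex.sq_norm, Complex.normSq_apply, Complex.normSq_apply]
        simp only [Complex.add_re, Complex.add_im, Complex.ofReal_re, Complex.ofReal_im]
        nlinarith [mul_pos hc1 hy0pos]
      exact lt_of_pow_lt_pow_left₀ 2 (norm_nonneg _) hsq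
    have hran : 0 ≤ ‖lam + ((r / K * x0 : ℝ) : ℂ)‖ := norm_nonneg _
    have hrcn : 0 ≤ ‖lam + ((r / K * x0 - c1 * y0 : ℝ) : ℂ)‖ := norm_nonneg _
    set ra := ‖lam + ((r / K * x0 : ℝ) : ℂ)‖ with hra_def
    set rc := ‖lam + ((r / K * x0 - c1 * y0 : ℝ) : ℂ)‖ with hrc_def
    set rd := ‖lam + (d1 : ℂ)‖ with hrd_def
    set rE := ‖Complex.exp (-lam * (τ1 : ℂ))‖ with hrE_def
    have t1 : d1 * rc * rE ≤ d1 * rc := by nlinarith [mul_nonneg (mul_nonneg hd1.le hrcn) (sub_nonneg.2 hE)]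
    have t2 : ra * d1 ≤ ra * rd := mul_le_mul_of_nonneg_left hrd hran
    have t3 : d1 * rc < d1 * ra := mul_lt_mul_of_pos_left hca hd1
    linarith
  · -- Q2 = 0
    have hre2 := congrArg Complex.re h2
    simp only [Complex.add_re, Complex.sub_re, Complex.ofReal_re, Complex.mul_re,
      Complex.ofReal_im, Complex.zero_re, zero_mul, sub_zero] at hre2
    have hE : ‖Complex.exp (-lam * (τ2 : ℂ))‖ ≤ 1 := by
      rw [Complex.norm_exp]
      have : (-lam * (τ2 : ℂ)).re = -(lam.re * τ2) := by
        simp [Complex.mul_re]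
      rw [this]
      exact Real.exp_le_one_iff.2 (by nlinarith)
    have hEre : (Complex.exp (-lam * (τ2 : ℂ))).re ≤ 1 := by
      have := Complex.re_le_norm (Complex.exp (-lam * (τ2 : ℂ)))
      linarith
    have hk2n : 0 ≤ e2 * c2 * y0 := by positivity
    nlinarith [hre2, hEre, hk2, hk2n, hre]
end

section
/- (Lemma, part 2, characteristic-root form.) Let r, K, d1, d2, c1, c2, e1, e2 > 0 and τ1, τ2 ≥ 0 satisfy d1 < e1·c1·K·(1 - c1·d2/(e2·c2·r)), and set x0 = d1/(e1·c1), y0 = (r/c1)·(1 - d1/(e1·c1·K)). Then there exists λ ∈ ℂ with Re λ > 0 such that Q(λ) = Q1(λ)·Q2(λ) = 0, where Q1(λ) = (λ + (r/K)·x0)·(λ + d1 - d1·e^{-λτ1}) + c1·d1·y0·e^{-λτ1} and Q2(λ) = λ + d2 - e2·c2·y0·e^{-λτ2}; i.e. the characteristic quasi-polynomial of the linearization of system (1) at (x0, y0, 0) has a root in the open right half-plane. -/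
/-- Lemma, part 2 (characteristic-root form): under condition (13),
the characteristic quasi-polynomial `Q = Q1 ⬝ Q2` of the linearization of system (1)
at `(x0, y0, 0)` has a root in the open right half-plane. -/
theorem charPoly_root_right_halfplane
    (r K d1 d2 c1 c2 e1 e2 τ1 τ2 x0 y0 : ℝ)
    (hr : 0 < r) (hK : 0 < K) (hd1 : 0 < d1) (hd2 : 0 < d2)
    (hc1 : 0 < c1) (hc2 : 0 < c2) (he1 : 0 < e1) (he2 : 0 < e2)
    (hτ1 : 0 ≤ τ1) (hτ2 : 0 ≤ τ2)
    (hx0 : x0 = d1 / (e1 * c1))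
    (hy0 : y0 = r / c1 * (1 - d1 / (e1 * c1 * K)))
    (hcase : d1 < e1 * c1 * K * (1 - c1 * d2 / (e2 * c2 * r))) :
    ∃ lam : ℂ, 0 < lam.re ∧
      ((lam + ((r / K * x0 : ℝ) : ℂ)) *
          (lam + (d1 : ℂ) - (d1 : ℂ) * Complex.exp (-lam * (τ1 : ℂ)))
        + ((c1 * d1 * y0 : ℝ) : ℂ) * Complex.exp (-lam * (τ1 : ℂ))) *
      (lam + (d2 : ℂ) - ((e2 * c2 * y0 : ℝ) : ℂ) * Complex.exp (-lam * (τ2 : ℂ))) = 0 := by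
  set A : ℝ := e2 * c2 * y0 with hA
  -- condition (13) gives A > d2
  have hAd2 : d2 < A := by
    have he1c1 : 0 < e1 * c1 := mul_pos he1 hc1
    have he2c2r : 0 < e2 * c2 * r := mul_pos (mul_pos he2 hc2) hr
    have h1 : d1 / (e1 * c1 * K) < 1 - c1 * d2 / (e2 * c2 * r) := by
      rw [div_lt_iff₀ (mul_pos he1c1 hK)]
      linarith [hcase]
    have h2 : c1 * d2 / (e2 * c2 * r) < 1 - d1 / (e1 * c1 * K) := by linarith
    have : e2 * c2 * (r / c1 * (c1 * d2 / (e2 * c2 * r))) = d2 := by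
      field_simp
    calc d2 = e2 * c2 * (r / c1 * (c1 * d2 / (e2 * c2 * r))) := this.symm
      _ < e2 * c2 * (r / c1 * (1 - d1 / (e1 * c1 * K))) := by
          apply mul_lt_mul_of_pos_left _ (mul_pos he2 hc2)
          exact mul_lt_mul_of_pos_left h2 (div_pos hr hc1)
      _ = A := by rw [hA, hy0]
  have hApos : 0 < A := lt_trans hd2 hAd2
  -- IVT for f t = t + d2 - A * exp (-t * τ2)
  set f : ℝ → ℝ := fun t => t + d2 - A * Real.exp (-t * τ2) with hf
  have hcont : ContinuousOn f (Set.Icc 0 A) := by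
    apply Continuous.continuousOn
    continuity
  have hf0 : f 0 < 0 := by simp [hf]; linarith
  have hfA : 0 < f A := by
    have : Real.exp (-A * τ2) ≤ 1 := by
      rw [Real.exp_le_one_iff]
      nlinarith
    have h2 : A * Real.exp (-A * τ2) ≤ A * 1 := mul_le_mul_of_nonneg_left this hApos.le
    show 0 < A + d2 - A * Real.exp (-A * τ2)
    linarith
  have hsub := intermediate_value_Icc hApos.le hcont
  have h0mem : (0 : ℝ) ∈ Set.Icc (f 0) (f A) := ⟨hf0.le, hfA.le⟩
  obtain ⟨t, ht, hft⟩ := hsub h0mem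
  have htpos : 0 < t := by
    rcases lt_or_eq_of_le ht.1 with h | h
    · exact h
    · exfalso; rw [← h] at hft; linarith
  refine ⟨(t : ℂ), by simpa using htpos, ?_⟩
  have hQ2 : ((t : ℂ) + (d2 : ℂ) - ((e2 * c2 * y0 : ℝ) : ℂ) *
      Complex.exp (-(t : ℂ) * (τ2 : ℂ))) = ((f t : ℝ) : ℂ) := by
    rw [hf, hA]
    push_cast
    ring
  rw [hQ2, hft]
  simp
end

section
/- Positive definiteness of the matrix L: let r, K, d1, d2, c1, c2, e1, e2 > 0, τ1, τ2 ≥ 0, x0 = d1/(e1·c1), y0 = (r/c1)·(1 - d1/(e1·c1·K)), and write p = (r/K)·x0. Assume 0 < c1·y0 < 2p and 0 < e2·c2·y0 < d2, let α > 0, let m1 > 0 satisfy p²·e^{-m1·τ1} > (p - c1·y0)² and (p² + d1²)·e^{-m1·τ1} > d1², and let m2 > 0 satisfy e2·c2·y0·e^{m2·τ2/2} < d2. Define l22 = α·((p² + d1²)·e^{-m1·τ1} - d1²), l11 = ((e1/d1)·p)²·l22 + α·e1²·(p²·e^{-m1·τ1} - (p - c1·y0)²), l12 = (e1/d1)·p·l22,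 l13 = α·c2·y0·(e1/d1)·p²·e^{-m1·τ1}, l23 = α·c2·y0·(p + d1)·e^{-m1·τ1}, and let h33 > 0 satisfy 2·h33·(d2 - e2·c2·y0·e^{m2·τ2/2}) > (l11·l23² + l22·l13² - 2·l12·l13·l23)/(l11·l22 - l12²), with l33 = 2·h33·(d2 - e2·c2·y0·e^{m2·τ2/2}). Then the symmetric 3×3 matrix L = [[l11, l12, l13], [l12, l22, l23], [l13, l23, l33]] is positive definite; in particular l11 > 0, l11·l22 - l12² > 0 and det L > 0. -/
set_option maxHeartbeats 1000000


open Matrix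

lemma quad_form_pos (a b c d e f x y z : ℝ)
    (h1 : 0 < a) (h2 : 0 < a * d - b ^ 2)
    (h3 : 0 < a * (d * f - e ^ 2) - b * (b * f - c * e) + c * (b * e - c * d))
    (hx : x ≠ 0 ∨ y ≠ 0 ∨ z ≠ 0) :
    0 < a * x ^ 2 + 2 * b * x * y + 2 * c * x * z + d * y ^ 2 + 2 * e * y * z + f * z ^ 2 := by
  have key : a * (a * d - b ^ 2) *
      (a * x ^ 2 + 2 * b * x * y + 2 * c * x * z + d * y ^ 2 + 2 * e * y * z + f * z ^ 2) =
      (a * d - b ^ 2) * (a * x + b * y + c * z) ^ 2 +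
      ((a * d - b ^ 2) * y + (a * e - b * c) * z) ^ 2 +
      a * (a * (d * f - e ^ 2) - b * (b * f - c * e) + c * (b * e - c * d)) * z ^ 2 := by
    ring
  have t1 : 0 ≤ (a * d - b ^ 2) * (a * x + b * y + c * z) ^ 2 :=
    mul_nonneg h2.le (sq_nonneg _)
  have t2 : 0 ≤ ((a * d - b ^ 2) * y + (a * e - b * c) * z) ^ 2 := sq_nonneg _
  have hpos : 0 < a * (a * d - b ^ 2) *
      (a * x ^ 2 + 2 * b * x * y + 2 * c * x * z + d * y ^ 2 + 2 * e * y * z + f * z ^ 2) := by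
    rcases eq_or_ne z 0 with hz | hz
    · subst hz
      rcases eq_or_ne y 0 with hy | hy
      · subst hy
        rcases hx with hx | hy | hz
        · have hax : a * x ≠ 0 := mul_ne_zero h1.ne' hx
          have hax2 : 0 < (a * x) ^ 2 := (sq_nonneg _).lt_of_ne' (pow_ne_zero 2 hax)
          have := mul_pos h2 hax2
          rw [key]; nlinarith
        · exact absurd rfl hy
        · exact absurd rfl hz
      · have h' : (a * d - b ^ 2) * y ≠ 0 := mul_ne_zero h2.ne' hy
        have h'' : 0 < ((a * d - b ^ 2) * y) ^ 2 := (sq_nonneg _).lt_of_ne' (pow_ne_zero 2 h')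
        rw [key]; nlinarith
    · have hz2 : 0 < z ^ 2 := (sq_nonneg z).lt_of_ne' (pow_ne_zero 2 hz)
      have t3 := mul_pos (mul_pos h1 h3) hz2
      rw [key]; linarith
  nlinarith [mul_pos h1 h2, hpos]

/-- Positive definiteness of the matrix `L` (formulae (28), (35)) in the
Lyapunov–Krasovskii construction for the plankton–fish system. -/
theorem matrixL_posDef
    (r K d1 d2 c1 c2 e1 e2 τ1 τ2 x0 y0 p α m1 m2
      l11 l12 l13 l22 l23 l33 h33 : ℝ)
    (hr : 0 < r) (hK : 0 < K) (hd1 : 0 < d1) (hd2 : 0 < d2)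
    (hc1 : 0 < c1) (hc2 : 0 < c2) (he1 : 0 < e1) (he2 : 0 < e2)
    (hτ1 : 0 ≤ τ1) (hτ2 : 0 ≤ τ2)
    (hx0 : x0 = d1 / (e1 * c1))
    (hy0 : y0 = r / c1 * (1 - d1 / (e1 * c1 * K)))
    (hp : p = r / K * x0)
    (hstab1 : 0 < c1 * y0) (hstab1' : c1 * y0 < 2 * p)
    (hstab2 : 0 < e2 * c2 * y0) (hstab2' : e2 * c2 * y0 < d2)
    (hα : 0 < α)
    (hm1 : 0 < m1)
    (hm1a : (p - c1 * y0) ^ 2 < p ^ 2 * Real.exp (-m1 * τ1))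
    (hm1b : d1 ^ 2 < (p ^ 2 + d1 ^ 2) * Real.exp (-m1 * τ1))
    (hm2 : 0 < m2)
    (hm2a : e2 * c2 * y0 * Real.exp (m2 * τ2 / 2) < d2)
    (hl22 : l22 = α * ((p ^ 2 + d1 ^ 2) * Real.exp (-m1 * τ1) - d1 ^ 2))
    (hl11 : l11 = (e1 / d1 * p) ^ 2 * l22
        + α * e1 ^ 2 * (p ^ 2 * Real.exp (-m1 * τ1) - (p - c1 * y0) ^ 2))
    (hl12 : l12 = e1 / d1 * p * l22)
    (hl13 : l13 = α * c2 * y0 * (e1 / d1) * p ^ 2 * Real.exp (-m1 * τ1))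
    (hl23 : l23 = α * c2 * y0 * (p + d1) * Real.exp (-m1 * τ1))
    (hh33 : 0 < h33)
    (hh33ineq : (l11 * l23 ^ 2 + l22 * l13 ^ 2 - 2 * l12 * l13 * l23) / (l11 * l22 - l12 ^ 2)
        < 2 * h33 * (d2 - e2 * c2 * y0 * Real.exp (m2 * τ2 / 2)))
    (hl33 : l33 = 2 * h33 * (d2 - e2 * c2 * y0 * Real.exp (m2 * τ2 / 2))) :
    (!![l11, l12, l13; l12, l22, l23; l13, l23, l33] : Matrix (Fin 3) (Fin 3) ℝ).PosDef ∧
      0 < l11 ∧ 0 < l11 * l22 - l12 ^ 2 ∧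
      0 < (!![l11, l12, l13; l12, l22, l23; l13, l23, l33] : Matrix (Fin 3) (Fin 3) ℝ).det := by
  have hl22pos : 0 < l22 := by
    rw [hl22]; exact mul_pos hα (by linarith)
  have hApos : 0 < α * e1 ^ 2 * (p ^ 2 * Real.exp (-m1 * τ1) - (p - c1 * y0) ^ 2) :=
    mul_pos (mul_pos hα (pow_pos he1 2)) (by linarith)
  have hD1 : 0 < l11 := by
    rw [hl11]
    have := mul_nonneg (sq_nonneg (e1 / d1 * p)) hl22pos.le
    linarith
  have hD2eq : l11 * l22 - l12 ^ 2 =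
      α * e1 ^ 2 * (p ^ 2 * Real.exp (-m1 * τ1) - (p - c1 * y0) ^ 2) * l22 := by
    rw [hl11, hl12]; ring
  have hD2 : 0 < l11 * l22 - l12 ^ 2 := by
    rw [hD2eq]; exact mul_pos hApos hl22pos
  have hnum : l11 * l23 ^ 2 + l22 * l13 ^ 2 - 2 * l12 * l13 * l23
      < l33 * (l11 * l22 - l12 ^ 2) := by
    rw [hl33]
    exact (div_lt_iff₀ hD2).mp hh33ineq
  have hD3 : 0 < l11 * (l22 * l33 - l23 ^ 2) - l12 * (l12 * l33 - l13 * l23)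
      + l13 * (l12 * l23 - l13 * l22) := by
    have hid : l11 * (l22 * l33 - l23 ^ 2) - l12 * (l12 * l33 - l13 * l23)
        + l13 * (l12 * l23 - l13 * l22)
        = l33 * (l11 * l22 - l12 ^ 2)
          - (l11 * l23 ^ 2 + l22 * l13 ^ 2 - 2 * l12 * l13 * l23) := by ring
    linarith
  have hdet : (!![l11, l12, l13; l12, l22, l23; l13, l23, l33] :
      Matrix (Fin 3) (Fin 3) ℝ).det = l11 * (l22 * l33 - l23 ^ 2)
      - l12 * (l12 * l33 - l13 * l23) + l13 * (l12 * l23 - l13 * l22) := by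
    simp [Matrix.det_fin_three]; ring
  refine ⟨Matrix.posDef_iff_dotProduct_mulVec.mpr ⟨?_, ?_⟩, hD1, hD2, by rw [hdet]; exact hD3⟩
  · rw [Matrix.IsHermitian, Matrix.conjTranspose]
    ext i j
    fin_cases i <;> fin_cases j <;> simp [Matrix.vecHead, Matrix.vecTail]
  · intro v hv
    have hv' : v 0 ≠ 0 ∨ v 1 ≠ 0 ∨ v 2 ≠ 0 := by
      by_contra h
      push_neg at h
      exact hv (funext fun i => by fin_cases i <;> simp [h.1, h.2.1, h.2.2])
    have hq := quad_form_pos l11 l12 l13 l22 l23 l33 (v 0) (v 1) (v 2) hD1 hD2 hD3 hv'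
    have hform : dotProduct (star v)
        ((!![l11, l12, l13; l12, l22, l23; l13, l23, l33] :
          Matrix (Fin 3) (Fin 3) ℝ).mulVec v)
        = l11 * (v 0) ^ 2 + 2 * l12 * (v 0) * (v 1) + 2 * l13 * (v 0) * (v 2)
          + l22 * (v 1) ^ 2 + 2 * l23 * (v 1) * (v 2) + l33 * (v 2) ^ 2 := by
      simp [Matrix.mulVec, dotProduct, Fin.sum_univ_three]
      ring
    rw [hform]; exact hq
end

section
/- Positive definiteness of the matrix H: let r, K, d1, d2, c1, c2, e1, e2 > 0, τ1, τ2 ≥ 0, x0 = d1/(e1·c1), y0 = (r/c1)·(1 - d1/(e1·c1·K)), and write p = (r/K)·x0. Assume 0 < c1·y0 < 2p and 0 < e2·c2·y0 < d2, let α > 0, let m1 > 0 satisfy p²·e^{-m1·τ1} > (p - c1·y0)² and (p² + d1²)·e^{-m1·τ1} > d1², let m2 > 0 satisfy e2·c2·y0·e^{m2·τ2/2} < d2, and define l22 = α·((p² + d1²)·e^{-m1·τ1} - d1²), l11 = ((e1/d1)p)²·l22 + α·e1²·(p²e^{-m1τ1} - (p - c1 y0)²), l12 = (e1/d1)·p·l22,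 l13 = α·c2·y0·(e1/d1)·p²·e^{-m1τ1}, l23 = α·c2·y0·(p + d1)·e^{-m1τ1}. Set h22 = α·(p + d1)·e^{-m1·τ1}, h12 = α·(e1/d1)·p²·e^{-m1·τ1}, h11 = (e1/d1)²·(p·l22 + α·c1·y0·d1²), and let h33 > 0 satisfy 2·h33·(d2 - e2·c2·y0·e^{m2·τ2/2}) > (l11·l23² + l22·l13² - 2·l12·l13·l23)/(l11·l22 - l12²). Then the symmetric matrix H = [[h11, h12, 0], [h12, h22, 0], [0, 0, h33]] is positive definite; in particular h11 > 0, h22 > 0 and h11·h22 - h12² > 0. -/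
set_option maxHeartbeats 1000000

open Matrix

lemma keyC (p d1 q E : ℝ) (hp : 0 < p) (hd1 : 0 < d1) (hq : 0 < q) (hE : 0 < E)
    (h1 : (p - q) ^ 2 < p ^ 2 * E) (h2 : d1 ^ 2 < (p ^ 2 + d1 ^ 2) * E) :
    0 < p * d1 * E * (p ^ 2 + p * d1 + d1 ^ 2) + (q - p) * d1 ^ 2 * (p + d1) := by
  rcases le_or_gt p q with h | h
  · have ha : 0 < p * d1 * E * (p ^ 2 + p * d1 + d1 ^ 2) := by positivity
    have hb : 0 ≤ (q - p) * d1 ^ 2 * (p + d1) := by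
      have : 0 ≤ q - p := by linarith
      positivity
    linarith
  · -- F > G with F, G > 0, via F^2 > G^2
    set F := p * d1 * E * (p ^ 2 + p * d1 + d1 ^ 2) with hF
    set G := (p - q) * d1 ^ 2 * (p + d1) with hG
    have hFpos : 0 < F := by positivity
    have hGpos : 0 < G := by
      have : 0 < p - q := by linarith
      positivity
    have hsq : G ^ 2 < F ^ 2 := by
      have hGsq : G ^ 2 < p ^ 2 * E * d1 ^ 4 * (p + d1) ^ 2 := by
        have hd : 0 < d1 ^ 4 * (p + d1) ^ 2 := by positivity
        calc G ^ 2 = (p - q) ^ 2 * (d1 ^ 4 * (p + d1) ^ 2) := by ring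
        _ < p ^ 2 * E * (d1 ^ 4 * (p + d1) ^ 2) := by
            exact mul_lt_mul_of_pos_right h1 hd
        _ = p ^ 2 * E * d1 ^ 4 * (p + d1) ^ 2 := by ring
      have hFsq : p ^ 2 * E * d1 ^ 4 * (p + d1) ^ 2 ≤ F ^ 2 := by
        have hE2 : d1 ^ 2 ≤ (p ^ 2 + d1 ^ 2) * E := le_of_lt h2
        have key : d1 ^ 2 * (p + d1) ^ 2 ≤ E * (p ^ 2 + p * d1 + d1 ^ 2) ^ 2 := by
          nlinarith [sq_nonneg (p * d1), mul_pos hp hd1, sq_nonneg p, sq_nonneg d1,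
            mul_nonneg (le_of_lt hE) (sq_nonneg (p * d1))]
        calc p ^ 2 * E * d1 ^ 4 * (p + d1) ^ 2
            = (p ^ 2 * d1 ^ 2 * E) * (d1 ^ 2 * (p + d1) ^ 2) := by ring
          _ ≤ (p ^ 2 * d1 ^ 2 * E) * (E * (p ^ 2 + p * d1 + d1 ^ 2) ^ 2) := by
              apply mul_le_mul_of_nonneg_left key (by positivity)
          _ = F ^ 2 := by rw [hF]; ring
      linarith
    have := lt_of_pow_lt_pow_left₀ 2 hFpos.le hsq
    linarith

lemma quadPos (a11 a12 a22 a33 u v w : ℝ)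
    (H1 : 0 < a11) (Hd : 0 < a11 * a22 - a12 ^ 2) (H3 : 0 < a33)
    (hne : u ≠ 0 ∨ v ≠ 0 ∨ w ≠ 0) :
    0 < a11 * u ^ 2 + 2 * a12 * (u * v) + a22 * v ^ 2 + a33 * w ^ 2 := by
  have key : a11 * (a11 * u ^ 2 + 2 * a12 * (u * v) + a22 * v ^ 2 + a33 * w ^ 2)
      = (a11 * u + a12 * v) ^ 2 + (a11 * a22 - a12 ^ 2) * v ^ 2 + (a11 * a33) * w ^ 2 := by
    ring
  have hrhs : 0 < (a11 * u + a12 * v) ^ 2 + (a11 * a22 - a12 ^ 2) * v ^ 2 + (a11 * a33) * w ^ 2 := by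
    rcases eq_or_ne v 0 with hv | hv
    · rcases eq_or_ne w 0 with hw | hw
      · have hu : u ≠ 0 := by tauto
        have : (a11 * u + a12 * v) ^ 2 = (a11 * u) ^ 2 := by rw [hv]; ring
        have h1 : 0 < (a11 * u + a12 * v) ^ 2 := by
          rw [this]; positivity
        nlinarith [mul_nonneg Hd.le (sq_nonneg v), mul_nonneg (mul_pos H1 H3).le (sq_nonneg w)]
      · have h1 : 0 < a11 * a33 * w ^ 2 := by positivity
        nlinarith [sq_nonneg (a11 * u + a12 * v), mul_nonneg Hd.le (sq_nonneg v)]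
    · have h1 : 0 < (a11 * a22 - a12 ^ 2) * v ^ 2 := by positivity
      nlinarith [sq_nonneg (a11 * u + a12 * v), mul_nonneg (mul_pos H1 H3).le (sq_nonneg w)]
  nlinarith [key, hrhs]

/-- Positive definiteness of the matrix `H` (formulae (24), (31)–(33), (36)) in the
Lyapunov–Krasovskii construction for the plankton–fish system. -/
theorem matrixH_posDef
    (r K d1 d2 c1 c2 e1 e2 τ1 τ2 x0 y0 p α m1 m2
      l11 l12 l13 l22 l23 h11 h12 h22 h33 : ℝ)
    (hr : 0 < r) (hK : 0 < K) (hd1 : 0 < d1) (hd2 : 0 < d2)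
    (hc1 : 0 < c1) (hc2 : 0 < c2) (he1 : 0 < e1) (he2 : 0 < e2)
    (hτ1 : 0 ≤ τ1) (hτ2 : 0 ≤ τ2)
    (hx0 : x0 = d1 / (e1 * c1))
    (hy0 : y0 = r / c1 * (1 - d1 / (e1 * c1 * K)))
    (hp : p = r / K * x0)
    (hstab1 : 0 < c1 * y0) (hstab1' : c1 * y0 < 2 * p)
    (hstab2 : 0 < e2 * c2 * y0) (hstab2' : e2 * c2 * y0 < d2)
    (hα : 0 < α)
    (hm1 : 0 < m1)
    (hm1a : (p - c1 * y0) ^ 2 < p ^ 2 * Real.exp (-m1 * τ1))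
    (hm1b : d1 ^ 2 < (p ^ 2 + d1 ^ 2) * Real.exp (-m1 * τ1))
    (hm2 : 0 < m2)
    (hm2a : e2 * c2 * y0 * Real.exp (m2 * τ2 / 2) < d2)
    (hl22 : l22 = α * ((p ^ 2 + d1 ^ 2) * Real.exp (-m1 * τ1) - d1 ^ 2))
    (hl11 : l11 = (e1 / d1 * p) ^ 2 * l22
        + α * e1 ^ 2 * (p ^ 2 * Real.exp (-m1 * τ1) - (p - c1 * y0) ^ 2))
    (hl12 : l12 = e1 / d1 * p * l22)
    (hl13 : l13 = α * c2 * y0 * (e1 / d1) * p ^ 2 * Real.exp (-m1 * τ1))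
    (hl23 : l23 = α * c2 * y0 * (p + d1) * Real.exp (-m1 * τ1))
    (hh22 : h22 = α * (p + d1) * Real.exp (-m1 * τ1))
    (hh12 : h12 = α * (e1 / d1) * p ^ 2 * Real.exp (-m1 * τ1))
    (hh11 : h11 = (e1 / d1) ^ 2 * (p * l22 + α * (c1 * y0) * d1 ^ 2))
    (hh33 : 0 < h33)
    (hh33ineq : (l11 * l23 ^ 2 + l22 * l13 ^ 2 - 2 * l12 * l13 * l23) / (l11 * l22 - l12 ^ 2)
        < 2 * h33 * (d2 - e2 * c2 * y0 * Real.exp (m2 * τ2 / 2))) :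
    (!![h11, h12, 0; h12, h22, 0; 0, 0, h33] : Matrix (Fin 3) (Fin 3) ℝ).PosDef ∧
      0 < h11 ∧ 0 < h22 ∧ 0 < h11 * h22 - h12 ^ 2 := by
  set E := Real.exp (-m1 * τ1) with hE
  have hEpos : 0 < E := Real.exp_pos _
  have hx0pos : 0 < x0 := by rw [hx0]; positivity
  have hppos : 0 < p := by rw [hp]; positivity
  have hl22pos : 0 < l22 := by
    rw [hl22]; have : 0 < (p ^ 2 + d1 ^ 2) * E - d1 ^ 2 := by linarith
    positivity
  have hh22pos : 0 < h22 := by rw [hh22]; positivity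
  have hh11pos : 0 < h11 := by rw [hh11]; positivity
  have hC := keyC p d1 (c1 * y0) E hppos hd1 hstab1 hEpos hm1a hm1b
  have hdet : 0 < h11 * h22 - h12 ^ 2 := by
    have heq : h11 * h22 - h12 ^ 2 = (e1 / d1) ^ 2 * α ^ 2 * E *
        (p * d1 * E * (p ^ 2 + p * d1 + d1 ^ 2) + (c1 * y0 - p) * d1 ^ 2 * (p + d1)) := by
      rw [hh11, hh22, hh12, hl22]; ring
    rw [heq]
    positivity
  refine ⟨posDef_iff_dotProduct_mulVec.mpr ⟨?_, ?_⟩, hh11pos, hh22pos, hdet⟩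
  · ext i j
    fin_cases i <;> fin_cases j <;> rfl
  · intro x hx
    have hne : x 0 ≠ 0 ∨ x 1 ≠ 0 ∨ x 2 ≠ 0 := by
      by_contra h
      push_neg at h
      exact hx (funext fun i => by fin_cases i <;> simp [h.1, h.2.1, h.2.2])
    have hexpand : star x ⬝ᵥ (!![h11, h12, 0; h12, h22, 0; 0, 0, h33] :
        Matrix (Fin 3) (Fin 3) ℝ) *ᵥ x =
        h11 * x 0 ^ 2 + 2 * h12 * (x 0 * x 1) + h22 * x 1 ^ 2 + h33 * x 2 ^ 2 := by
      simp [dotProduct, Matrix.mulVec, Fin.sum_univ_three]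
      ring
    rw [hexpand]
    exact quadPos h11 h12 h22 h33 (x 0) (x 1) (x 2) hh11pos hdet hh33 hne
end

section
/- Estimate for the delayed nonlinearity g1 (inequality (55)): let h11, h22 > 0 and h12 be reals with h11·h22 - h12² > 0, let μ1 > 0, m1 > 0, τ1 ≥ 0 and e1, c1 ≥ 0. Set H1 = [[h11, h12, 0], [h12, h22, 0], [0, 0, 0]] and, for v = (v1, v2, v3) ∈ ℝ³, G1(v) = (0, e1·c1·v1·v2, 0). Then for all u, v ∈ ℝ³: μ1·⟨H1·u, u⟩ - μ1·e^{-m1·τ1}·⟨H1·v, v⟩ + 2·⟨H1·u, G1(v)⟩ ≤ μ1·(1 + e^{m1·τ1}·(e1·c1/μ1)²·(h22²/(h11·h22 - h12²))·v2²)·⟨H1·u, u⟩. -/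
open Matrix

lemma g1_key (h11 h22 h12 μ1 F k : ℝ)
    (h11p : 0 < h11) (h22p : 0 < h22) (hdet : 0 < h11 * h22 - h12 ^ 2)
    (hμ1 : 0 < μ1) (hF : 1 ≤ F)
    (u0 u1 v0 v1 : ℝ) :
    μ1 * (h11 * u0 ^ 2 + 2 * h12 * u0 * u1 + h22 * u1 ^ 2)
      - μ1 * F⁻¹ * (h11 * v0 ^ 2 + 2 * h12 * v0 * v1 + h22 * v1 ^ 2)
      + 2 * k * v0 * v1 * (h12 * u0 + h22 * u1)
      ≤ μ1 * (1 + F * (k / μ1) ^ 2 * (h22 ^ 2 / (h11 * h22 - h12 ^ 2)) * v1 ^ 2) *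
          (h11 * u0 ^ 2 + 2 * h12 * u0 * u1 + h22 * u1 ^ 2) := by
  have hF0 : 0 < F := lt_of_lt_of_le one_pos hF
  have hD : 0 < h11 * h22 - h12 ^ 2 := hdet
  rw [← sub_nonneg]
  have hne : (μ1 * F * (h11 * h22 - h12 ^ 2)) ≠ 0 := by positivity
  rw [show μ1 * (1 + F * (k / μ1) ^ 2 * (h22 ^ 2 / (h11 * h22 - h12 ^ 2)) * v1 ^ 2) *
          (h11 * u0 ^ 2 + 2 * h12 * u0 * u1 + h22 * u1 ^ 2)
        - (μ1 * (h11 * u0 ^ 2 + 2 * h12 * u0 * u1 + h22 * u1 ^ 2)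
          - μ1 * F⁻¹ * (h11 * v0 ^ 2 + 2 * h12 * v0 * v1 + h22 * v1 ^ 2)
          + 2 * k * v0 * v1 * (h12 * u0 + h22 * u1))
      = (k ^ 2 * F ^ 2 * h22 ^ 2 * v1 ^ 2 * (h11 * u0 ^ 2 + 2 * h12 * u0 * u1 + h22 * u1 ^ 2)
          + μ1 ^ 2 * (h11 * h22 - h12 ^ 2) * (h11 * v0 ^ 2 + 2 * h12 * v0 * v1 + h22 * v1 ^ 2)
          - 2 * k * v0 * v1 * (h12 * u0 + h22 * u1) * μ1 * F * (h11 * h22 - h12 ^ 2))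
        / (μ1 * F * (h11 * h22 - h12 ^ 2)) by
        have hD' : h11 * h22 - h12 ^ 2 ≠ 0 := ne_of_gt hD
        generalize h11 * h22 - h12 ^ 2 = D at hD' ⊢
        field_simp; ring]
  apply div_nonneg _ (by positivity)
  nlinarith [sq_nonneg (F * k * h22 * v1 * (h12 * u0 + h22 * u1) - μ1 * (h11 * h22 - h12 ^ 2) * v0),
    mul_nonneg (by positivity : (0:ℝ) ≤ k ^ 2 * F ^ 2 * h22 ^ 2 * v1 ^ 2 * (h11 * h22 - h12 ^ 2)) (sq_nonneg u0),
    mul_nonneg (by positivity : (0:ℝ) ≤ μ1 ^ 2 * (h11 * h22 - h12 ^ 2) / h22) (sq_nonneg (h12 * v0 + h22 * v1)),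
    mul_nonneg (by positivity : (0:ℝ) ≤ μ1 ^ 2) (sq_nonneg (h12 * v0 + h22 * v1))]

/-- Estimate (55) for the delayed nonlinearity `g1` in the proof of the main theorem. -/
theorem g1_estimate
    (h11 h22 h12 μ1 m1 τ1 e1 c1 : ℝ)
    (h11p : 0 < h11) (h22p : 0 < h22) (hdet : 0 < h11 * h22 - h12 ^ 2)
    (hμ1 : 0 < μ1) (hm1 : 0 < m1) (hτ1 : 0 ≤ τ1) (he1 : 0 ≤ e1) (hc1 : 0 ≤ c1) :
    ∀ u v : Fin 3 → ℝ,
      μ1 * ((!![h11, h12, 0; h12, h22, 0; 0, 0, 0] : Matrix (Fin 3) (Fin 3) ℝ).mulVec u ⬝ᵥ u)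
        - μ1 * Real.exp (-m1 * τ1) *
          ((!![h11, h12, 0; h12, h22, 0; 0, 0, 0] : Matrix (Fin 3) (Fin 3) ℝ).mulVec v ⬝ᵥ v)
        + 2 * ((!![h11, h12, 0; h12, h22, 0; 0, 0, 0] : Matrix (Fin 3) (Fin 3) ℝ).mulVec u ⬝ᵥ
            ![0, e1 * c1 * v 0 * v 1, 0])
      ≤ μ1 * (1 + Real.exp (m1 * τ1) * (e1 * c1 / μ1) ^ 2 *
            (h22 ^ 2 / (h11 * h22 - h12 ^ 2)) * (v 1) ^ 2) *
          ((!![h11, h12, 0; h12, h22, 0; 0, 0, 0] : Matrix (Fin 3) (Fin 3) ℝ).mulVec u ⬝ᵥ u) := by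
  intro u v
  have hF : 1 ≤ Real.exp (m1 * τ1) := Real.one_le_exp (by positivity)
  have h := g1_key h11 h22 h12 μ1 (Real.exp (m1 * τ1)) (e1 * c1) h11p h22p hdet hμ1 hF
    (u 0) (u 1) (v 0) (v 1)
  have hexp : Real.exp (-(m1 * τ1)) = (Real.exp (m1 * τ1))⁻¹ := Real.exp_neg _
  simp [Matrix.mulVec, dotProduct, Fin.sum_univ_three, hexp]
  ring_nf
  ring_nf at h
  linarith [h]
end

section
/- Estimate (61) for the undelayed nonlinearity f: let h11, h22, h33 > 0 and 0 ≤ h12 < √(h11·h22), r, K, c1, c2 > 0, set H = [[h11, h12, 0], [h12, h22, 0], [0, 0, h33]], F(u) = ( -(r/K)·u1² - c1·u1·u2, -c2·u2·u3, 0 ) for u = (u1, u2, u3) ∈ ℝ³, and q = (2/√(1 - h12/√(h11·h22))) · max{ √((r/K)² + c1²) / ( min{√h11, √h22} · √(1 - h12/√(h11·h22)) ), c2/√h33 }. Then for every u ∈ ℝ³: 2·⟨H·u, F(u)⟩ ≤ q·⟨H·u, u⟩^{3/2}. -/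
open Matrix
set_option maxHeartbeats 1000000

lemma two_sqrt_mul_le {X Y : ℝ} (hX : 0 ≤ X) (hY : 0 ≤ Y) :
    2 * Real.sqrt (X * Y) ≤ X + Y := by
  rw [Real.sqrt_mul hX]
  nlinarith [sq_nonneg (Real.sqrt X - Real.sqrt Y), Real.sq_sqrt hX, Real.sq_sqrt hY,
    Real.sqrt_nonneg X, Real.sqrt_nonneg Y]

lemma sq_le_of_lt_sqrt {d P : ℝ} (hP : 0 ≤ P) (h1 : 0 ≤ d) (h2 : d < Real.sqrt P) :
    d ^ 2 ≤ P := by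
  have h := pow_le_pow_left₀ h1 h2.le 2
  rwa [Real.sq_sqrt hP] at h

lemma key_lemma {θ a b c V : ℝ} (hθ0 : 0 < θ) (ha : 0 ≤ a) (hb : 0 ≤ b)
    (hc : 0 ≤ c) (hV : θ * (a + b) + c ≤ V) :
    Real.sqrt θ * Real.sqrt (a * (a + b)) + Real.sqrt (b * c) ≤ V / Real.sqrt θ := by
  have hV0 : 0 ≤ V := le_trans (by positivity) hV
  have h1 : Real.sqrt θ * Real.sqrt (a * (a + b)) = Real.sqrt (θ * (a * (a + b))) :=
    (Real.sqrt_mul hθ0.le _).symm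
  have hP : Real.sqrt (θ * (a * (a + b))) ^ 2 = θ * (a * (a + b)) :=
    Real.sq_sqrt (by positivity)
  have hQ : Real.sqrt (b * c) ^ 2 = b * c := Real.sq_sqrt (by positivity)
  have hcross : 2 * (Real.sqrt (θ * (a * (a + b))) * Real.sqrt (b * c)) ≤
      θ * a * b + (a + b) * c := by
    have e : Real.sqrt (θ * (a * (a + b))) * Real.sqrt (b * c)
        = Real.sqrt ((θ * a * b) * ((a + b) * c)) := by
      rw [← Real.sqrt_mul (by positivity)]
      ring_nf
    rw [e]
    exact two_sqrt_mul_le (by positivity) (by positivity)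
  have hL2 : (Real.sqrt θ * Real.sqrt (a * (a + b)) + Real.sqrt (b * c)) ^ 2 ≤
      (θ * a + c) * (a + 2 * b) := by
    rw [h1]
    nlinarith [hP, hQ, hcross]
  have hstep : θ * ((θ * a + c) * (a + 2 * b)) ≤ V ^ 2 := by
    have hs2 : (θ * (a + b) + c) ^ 2 ≤ V ^ 2 := by
      have := pow_le_pow_left₀ (show (0:ℝ) ≤ θ * (a + b) + c by positivity) hV 2
      exact this
    nlinarith [hs2, sq_nonneg (θ * b), sq_nonneg c,
      mul_nonneg (mul_nonneg hθ0.le ha) hc]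
  have hL0 : 0 ≤ Real.sqrt θ * Real.sqrt (a * (a + b)) + Real.sqrt (b * c) := by positivity
  have hsθ : 0 < Real.sqrt θ := Real.sqrt_pos.2 hθ0
  rw [le_div_iff₀ hsθ]
  nlinarith [hL2, hstep, Real.sq_sqrt hθ0.le, hsθ, hL0, Real.sqrt_nonneg θ,
    mul_le_mul_of_nonneg_left hL2 hθ0.le]

/-- Estimate (61) for the undelayed nonlinearity `f` in the proof of the main theorem:
`2⟨H u, F(u)⟩ ≤ q ⟨H u, u⟩^{3/2}` with the constant `q` of formula (44). -/
theorem f_estimate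
    (h11 h22 h12 h33 r K c1 c2 : ℝ)
    (h11p : 0 < h11) (h22p : 0 < h22) (h33p : 0 < h33)
    (h12nn : 0 ≤ h12) (h12lt : h12 < Real.sqrt (h11 * h22))
    (hr : 0 < r) (hK : 0 < K) (hc1 : 0 < c1) (hc2 : 0 < c2) :
    ∀ u : Fin 3 → ℝ,
      2 * ((!![h11, h12, 0; h12, h22, 0; 0, 0, h33] : Matrix (Fin 3) (Fin 3) ℝ).mulVec u ⬝ᵥ
          ![-(r / K) * (u 0) ^ 2 - c1 * u 0 * u 1, -c2 * u 1 * u 2, 0])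
        ≤ (2 / Real.sqrt (1 - h12 / Real.sqrt (h11 * h22)) *
              max (Real.sqrt ((r / K) ^ 2 + c1 ^ 2) /
                  (min (Real.sqrt h11) (Real.sqrt h22) *
                    Real.sqrt (1 - h12 / Real.sqrt (h11 * h22))))
                (c2 / Real.sqrt h33)) *
            ((!![h11, h12, 0; h12, h22, 0; 0, 0, h33] : Matrix (Fin 3) (Fin 3) ℝ).mulVec u ⬝ᵥ u)
              ^ ((3 : ℝ) / 2) := by
  intro u
  have hs12 : (0:ℝ) < Real.sqrt (h11 * h22) := lt_of_le_of_lt h12nn h12lt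
  set x := u 0 with hxdef
  set y := u 1 with hydef
  set z := u 2 with hzdef
  have hLeq : ((!![h11, h12, 0; h12, h22, 0; 0, 0, h33] : Matrix (Fin 3) (Fin 3) ℝ).mulVec u ⬝ᵥ
      ![-(r / K) * x ^ 2 - c1 * x * y, -c2 * y * z, 0])
      = (h11*x + h12*y) * (-(r / K) * x ^ 2 - c1 * x * y)
        + (h12*x + h22*y) * (-(c2 * y * z)) := by
    simp [Matrix.mulVec, dotProduct, Fin.sum_univ_three]
    rfl
  have hVeq : ((!![h11, h12, 0; h12, h22, 0; 0, 0, h33] : Matrix (Fin 3) (Fin 3) ℝ).mulVec u ⬝ᵥ u)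
      = h11*x^2 + 2*h12*(x*y) + h22*y^2 + h33*z^2 := by
    simp [Matrix.mulVec, dotProduct, Fin.sum_univ_three]
    ring
  rw [hLeq, hVeq]
  clear hLeq hVeq
  set s1 := Real.sqrt h11 with hs1def
  set s2 := Real.sqrt h22 with hs2def
  set s3 := Real.sqrt h33 with hs3def
  have hs1 : 0 < s1 := Real.sqrt_pos.2 h11p
  have hs2 : 0 < s2 := Real.sqrt_pos.2 h22p
  have hs3 : 0 < s3 := Real.sqrt_pos.2 h33p
  have hs1sq : s1 ^ 2 = h11 := Real.sq_sqrt h11p.le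
  have hs2sq : s2 ^ 2 = h22 := Real.sq_sqrt h22p.le
  have hs3sq : s3 ^ 2 = h33 := Real.sq_sqrt h33p.le
  have hs12eq : Real.sqrt (h11 * h22) = s1 * s2 := Real.sqrt_mul h11p.le h22
  set θ := 1 - h12 / Real.sqrt (h11 * h22) with hθdef
  have hθ0 : 0 < θ := by
    have := (div_lt_one hs12).2 h12lt
    rw [hθdef]; linarith
  have hsθ : 0 < Real.sqrt θ := Real.sqrt_pos.2 hθ0
  set G := (r / K) ^ 2 + c1 ^ 2 with hGdef
  have hG0 : 0 < G := by positivity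
  set m := min s1 s2 with hmdef
  have hm : 0 < m := lt_min hs1 hs2
  set A := Real.sqrt G / (m * Real.sqrt θ) with hAdef
  set B := c2 / s3 with hBdef
  set M := max A B with hMdef
  have hA0 : 0 < A := by positivity
  have hM0 : 0 < M := lt_of_lt_of_le hA0 (le_max_left _ _)
  set a := h11*x^2 with hadef
  set b := h22*y^2 with hbdef
  set c := h33*z^2 with hcdef
  set V := a + 2*h12*(x*y) + b + c with hVdef
  have ha : 0 ≤ a := by rw [hadef]; positivity
  have hb : 0 ≤ b := by rw [hbdef]; positivity
  have hc : 0 ≤ c := by rw [hcdef]; positivity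
  -- V dominates θ(a+b)+c
  have hkey : h12 * (a + b) + 2 * (s1*s2) * (h12 * (x*y)) = h12 * (s1*x + s2*y)^2 := by
    rw [hadef, hbdef, ← hs1sq, ← hs2sq]; ring
  have hkey2 : 0 ≤ h12 * (a + b) + 2 * (s1*s2) * (h12 * (x*y)) := by
    rw [hkey]; exact mul_nonneg h12nn (sq_nonneg _)
  have habV : θ * (a + b) + c ≤ V := by
    have h2 : -(2 * h12 * (x*y)) ≤ (h12 / (s1*s2)) * (a + b) := by
      rw [div_mul_eq_mul_div, le_div_iff₀ (by positivity)]
      linarith only [hkey2]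
    have h1θ : θ * (a + b) = (a + b) - (h12/(s1*s2)) * (a + b) := by
      rw [hθdef, hs12eq]; ring
    have hVe : V = a + b + c + 2 * h12 * (x*y) := by
      rw [hVdef]; ring
    rw [hVe, h1θ]; linarith only [h2]
  have hV0 : 0 ≤ V := le_trans (by positivity) habV
  have hsV := Real.sqrt_nonneg V
  -- bounds on |H u| components
  have h12sq : h12 ^ 2 ≤ h11 * h22 :=
    sq_le_of_lt_sqrt (mul_nonneg h11p.le h22p.le) h12nn h12lt
  have hP1 : |h11*x + h12*y| ≤ s1 * Real.sqrt V := by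
    have h1 : (h11*x + h12*y)^2 ≤ h11 * V := by
      rw [hVdef, hadef, hbdef, hcdef]
      linarith only [mul_nonneg (sub_nonneg.2 h12sq) (sq_nonneg y),
        mul_nonneg (mul_nonneg h11p.le h33p.le) (sq_nonneg z)]
    calc |h11*x + h12*y| ≤ Real.sqrt (h11 * V) := Real.abs_le_sqrt h1
      _ = s1 * Real.sqrt V := Real.sqrt_mul h11p.le V
  have hP2 : |h12*x + h22*y| ≤ s2 * Real.sqrt V := by
    have h1 : (h12*x + h22*y)^2 ≤ h22 * V := by
      rw [hVdef, hadef, hbdef, hcdef]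
      linarith only [mul_nonneg (sub_nonneg.2 h12sq) (sq_nonneg x),
        mul_nonneg (mul_nonneg h22p.le h33p.le) (sq_nonneg z)]
    calc |h12*x + h22*y| ≤ Real.sqrt (h22 * V) := Real.abs_le_sqrt h1
      _ = s2 * Real.sqrt V := Real.sqrt_mul h22p.le V
  -- bound on F1
  have hF1 : |(-(r / K) * x ^ 2 - c1 * x * y)| ≤ |x| * (Real.sqrt G * Real.sqrt (x^2 + y^2)) := by
    have e : -(r / K) * x ^ 2 - c1 * x * y = -(x * ((r/K)*x + c1*y)) := by ring
    rw [e, abs_neg, abs_mul]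
    have h1 : |(r/K)*x + c1*y| ≤ Real.sqrt G * Real.sqrt (x^2 + y^2) := by
      have h2 : ((r/K)*x + c1*y)^2 ≤ G * (x^2 + y^2) := by
        rw [hGdef]; linarith only [sq_nonneg (c1*x - (r/K)*y)]
      calc |(r/K)*x + c1*y| ≤ Real.sqrt (G * (x^2 + y^2)) := Real.abs_le_sqrt h2
        _ = Real.sqrt G * Real.sqrt (x^2 + y^2) := Real.sqrt_mul hG0.le _
    exact mul_le_mul_of_nonneg_left h1 (abs_nonneg x)
  -- sqrt identities
  have hsa : Real.sqrt a = s1 * |x| := by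
    rw [hadef, Real.sqrt_mul h11p.le, Real.sqrt_sq_eq_abs]
  have hsb : Real.sqrt b = s2 * |y| := by
    rw [hbdef, Real.sqrt_mul h22p.le, Real.sqrt_sq_eq_abs]
  have hsc : Real.sqrt c = s3 * |z| := by
    rw [hcdef, Real.sqrt_mul h33p.le, Real.sqrt_sq_eq_abs]
  have hxy : Real.sqrt (x^2 + y^2) ≤ Real.sqrt (a + b) / m := by
    have hmsq : m^2 * (x^2 + y^2) ≤ a + b := by
      have hm1 : m^2 ≤ h11 := by
        rw [← hs1sq]; exact pow_le_pow_left₀ hm.le (min_le_left _ _) 2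
      have hm2 : m^2 ≤ h22 := by
        rw [← hs2sq]; exact pow_le_pow_left₀ hm.le (min_le_right _ _) 2
      rw [hadef, hbdef]
      linarith only [mul_le_mul_of_nonneg_right hm1 (sq_nonneg x),
        mul_le_mul_of_nonneg_right hm2 (sq_nonneg y)]
    rw [le_div_iff₀ hm]
    calc Real.sqrt (x^2 + y^2) * m = Real.sqrt ((x^2 + y^2) * m^2) := by
          rw [Real.sqrt_mul (by positivity), Real.sqrt_sq hm.le]
      _ ≤ Real.sqrt (a + b) := Real.sqrt_le_sqrt (by linarith)
  -- first term
  have hT1 : (h11*x + h12*y) * (-(r / K) * x ^ 2 - c1 * x * y)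
      ≤ Real.sqrt V * ((Real.sqrt G / m) * Real.sqrt (a * (a + b))) := by
    calc (h11*x + h12*y) * (-(r / K) * x ^ 2 - c1 * x * y)
        ≤ |(h11*x + h12*y) * (-(r / K) * x ^ 2 - c1 * x * y)| := le_abs_self _
      _ = |h11*x + h12*y| * |(-(r / K) * x ^ 2 - c1 * x * y)| := abs_mul _ _
      _ ≤ (s1 * Real.sqrt V) * (|x| * (Real.sqrt G * Real.sqrt (x^2 + y^2))) :=
          mul_le_mul hP1 hF1 (abs_nonneg _) (by positivity)
      _ = Real.sqrt V * (Real.sqrt G * (Real.sqrt a * Real.sqrt (x^2+y^2))) := by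
          rw [hsa]; ring
      _ ≤ Real.sqrt V * (Real.sqrt G * (Real.sqrt a * (Real.sqrt (a+b) / m))) := by
          gcongr
      _ = Real.sqrt V * ((Real.sqrt G / m) * Real.sqrt (a * (a + b))) := by
          rw [Real.sqrt_mul ha]; ring
  -- second term
  have hT2 : (h12*x + h22*y) * (-(c2 * y * z))
      ≤ Real.sqrt V * (B * Real.sqrt (b * c)) := by
    calc (h12*x + h22*y) * (-(c2 * y * z))
        ≤ |(h12*x + h22*y) * (-(c2 * y * z))| := le_abs_self _
      _ = |h12*x + h22*y| * (c2 * |y| * |z|) := by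
          rw [abs_mul, abs_neg, abs_mul, abs_mul, abs_of_pos hc2]
      _ ≤ (s2 * Real.sqrt V) * (c2 * |y| * |z|) :=
          mul_le_mul_of_nonneg_right hP2 (by positivity)
      _ = Real.sqrt V * (B * Real.sqrt (b * c)) := by
          rw [Real.sqrt_mul hb, hsb, hsc, hBdef]
          field_simp
  -- combining via the key lemma
  have hAθ : Real.sqrt G / m = A * Real.sqrt θ := by
    rw [hAdef]; field_simp
  have hsum : (Real.sqrt G / m) * Real.sqrt (a * (a + b)) + B * Real.sqrt (b * c)
      ≤ M * (V / Real.sqrt θ) := by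
    have h1 : (Real.sqrt G / m) * Real.sqrt (a * (a + b)) + B * Real.sqrt (b * c)
        ≤ M * (Real.sqrt θ * Real.sqrt (a * (a + b)) + Real.sqrt (b * c)) := by
      have e1 : A * Real.sqrt θ * Real.sqrt (a * (a + b))
          ≤ M * (Real.sqrt θ * Real.sqrt (a * (a + b))) := by
        rw [← mul_assoc]
        exact mul_le_mul_of_nonneg_right
          (mul_le_mul_of_nonneg_right (le_max_left A B) hsθ.le) (Real.sqrt_nonneg _)
      have e2 : B * Real.sqrt (b * c) ≤ M * Real.sqrt (b * c) :=
        mul_le_mul_of_nonneg_right (le_max_right _ _) (Real.sqrt_nonneg _)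
      rw [hAθ]
      exact le_trans (add_le_add e1 e2) (le_of_eq (mul_add M _ _).symm)
    exact le_trans h1 (mul_le_mul_of_nonneg_left (key_lemma hθ0 ha hb hc habV) hM0.le)
  -- rpow identity
  have hrpow : V ^ ((3:ℝ)/2) = V * Real.sqrt V := by
    have h1 : V ^ ((3:ℝ)/2) = Real.sqrt V ^ (3:ℕ) := by
      rw [← Real.rpow_natCast (Real.sqrt V) 3, Real.sqrt_eq_rpow, ← Real.rpow_mul hV0]
      norm_num
    rw [h1, pow_succ, Real.sq_sqrt hV0]
  rw [hrpow]
  calc 2 * ((h11*x + h12*y) * (-(r / K) * x ^ 2 - c1 * x * y)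
        + (h12*x + h22*y) * (-(c2 * y * z)))
      ≤ 2 * (Real.sqrt V * ((Real.sqrt G / m) * Real.sqrt (a * (a + b)))
        + Real.sqrt V * (B * Real.sqrt (b * c))) := by linarith only [hT1, hT2]
    _ = 2 * Real.sqrt V * ((Real.sqrt G / m) * Real.sqrt (a * (a + b))
        + B * Real.sqrt (b * c)) := by ring
    _ ≤ 2 * Real.sqrt V * (M * (V / Real.sqrt θ)) := by
        exact mul_le_mul_of_nonneg_left hsum (by positivity)
    _ = 2 / Real.sqrt θ * M * (V * Real.sqrt V) := by
        field_simp
end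

section
/- Nonlinear Gronwall-type comparison lemma: let ε > 0, q > 0 and T > 0, and let V : [0, T] → ℝ be continuous, nonnegative, differentiable on (0, T), and satisfy V'(t) ≤ -ε·V(t) + q·V(t)^{3/2} for all t ∈ (0, T), together with √(V(0)) < ε/q. Then for all t ∈ [0, T]: V(t) ≤ V(0)·e^{-ε·t} / (1 - (q/ε)·√(V(0)))². -/
open Set Filter Topology

/-- Comparison with the explicit supersolution starting at time `s`. -/
lemma gronwall_key_aux
    (ε q T : ℝ) (hε : 0 < ε) (hq : 0 < q)
    (V V' : ℝ → ℝ)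
    (hVc : ContinuousOn V (Set.Icc 0 T))
    (hVd : ∀ t ∈ Set.Ioo (0:ℝ) T, HasDerivAt V (V' t) t)
    (hVineq : ∀ t ∈ Set.Ioo (0:ℝ) T, V' t ≤ -ε * V t + q * (V t) ^ ((3 : ℝ) / 2))
    (s : ℝ) (hs0 : 0 < s) (hsT : s < T)
    (hb : (q + s) / ε < (Real.sqrt (V s + s))⁻¹) :
    ∀ t ∈ Set.Icc s T,
      V t ≤ (((Real.sqrt (V s + s))⁻¹ - (q + s) / ε) ^ 2)⁻¹
              * Real.exp (-(ε * (t - s))) := by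
  have hqs : 0 < q + s := by linarith
  have ha : 0 < (q + s) / ε := div_pos hqs hε
  have hsc : 0 < Real.sqrt (V s + s) := inv_pos.mp (lt_trans ha hb)
  have hc : 0 < V s + s := Real.sqrt_pos.mp hsc
  set b : ℝ := (Real.sqrt (V s + s))⁻¹ - (q + s) / ε with hbdef
  have hbpos : 0 < b := sub_pos.mpr hb
  set D : ℝ → ℝ := fun t => (q + s) / ε + b * Real.exp (ε * (t - s) / 2) with hDdef
  have hD : ∀ x, 0 < D x := fun x => add_pos ha (mul_pos hbpos (Real.exp_pos _))
  set g : ℝ → ℝ := fun t => (D t ^ 2)⁻¹ with hgdef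
  have hgpos : ∀ x, 0 < g x := fun x => inv_pos.mpr (pow_pos (hD x) 2)
  have h32 : ∀ x, (g x) ^ ((3:ℝ)/2) = (D x ^ 3)⁻¹ := by
    intro x
    have hDx : (0:ℝ) ≤ D x := (hD x).le
    have : g x = D x ^ (-(2:ℝ)) := by
      rw [hgdef, Real.rpow_neg hDx, Real.rpow_two]
    rw [this, ← Real.rpow_natCast (D x) 3, ← Real.rpow_neg hDx, ← Real.rpow_mul hDx]
    norm_num
  have hgd : ∀ x, HasDerivAt g (-ε * g x + (q + s) * (g x) ^ ((3:ℝ)/2)) x := by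
    intro x
    have h1 : HasDerivAt (fun t : ℝ => ε * (t - s) / 2) (ε / 2) x := by
      simpa using (((hasDerivAt_id x).sub_const s).const_mul ε).div_const 2
    have hE := h1.exp
    have hDd : HasDerivAt D (b * (Real.exp (ε * (x - s) / 2) * (ε / 2))) x :=
      (hE.const_mul b).const_add ((q + s) / ε)
    have hinv := (hDd.pow 2).inv (pow_ne_zero 2 (hD x).ne')
    have heq : -(↑(2:ℕ) * D x ^ (2 - 1) * (b * (Real.exp (ε * (x - s) / 2) * (ε / 2))))
          / (D x ^ 2) ^ 2
        = -ε * g x + (q + s) * (g x) ^ ((3:ℝ)/2) := by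
      rw [h32 x, hgdef]
      have hbe : b * Real.exp (ε * (x - s) / 2) = D x - (q + s) / ε := by
        simp [hDdef]
      rw [show b * (Real.exp (ε * (x - s) / 2) * (ε / 2))
            = (D x - (q + s) / ε) * (ε / 2) by rw [← mul_assoc, hbe]]
      have hDne := (hD x).ne'
      field_simp
      ring
    rw [← heq]
    exact hinv
  have hmain : ∀ t ∈ Set.Icc s T, V t ≤ g t := by
    intro t ht
    refine image_le_of_deriv_right_lt_deriv_boundary
      (f := V) (f' := V') (a := s) (b := T)
      (B := g) (B' := fun x => -ε * g x + (q + s) * (g x) ^ ((3:ℝ)/2))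
      (hVc.mono (Icc_subset_Icc hs0.le le_rfl)) ?_ ?_ (fun x => hgd x) ?_ ht
    · intro x hx
      exact (hVd x ⟨lt_of_lt_of_le hs0 hx.1, hx.2⟩).hasDerivWithinAt
    · -- V s ≤ g s
      have hDs : D s = (Real.sqrt (V s + s))⁻¹ := by
        simp [hDdef, hbdef]
      have : g s = V s + s := by
        rw [hgdef]
        simp only [hDs]
        rw [← inv_pow, inv_inv, Real.sq_sqrt hc.le]
      rw [this]; linarith
    · intro x hx hVg
      have hxIoo : x ∈ Set.Ioo (0:ℝ) T := ⟨lt_of_lt_of_le hs0 hx.1, hx.2⟩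
      have h1 := hVineq x hxIoo
      rw [hVg] at h1
      have h2 : q * (g x) ^ ((3:ℝ)/2) < (q + s) * (g x) ^ ((3:ℝ)/2) :=
        mul_lt_mul_of_pos_right (by linarith) (Real.rpow_pos_of_pos (hgpos x) _)
      linarith
  intro t ht
  refine le_trans (hmain t ht) ?_
  -- g t ≤ b⁻² * exp (-(ε (t-s)))
  have hEt : (0:ℝ) < Real.exp (ε * (t - s) / 2) := Real.exp_pos _
  have hDt_ge : b * Real.exp (ε * (t - s) / 2) ≤ D t := by
    simp only [hDdef]; linarith
  have hbE : (0:ℝ) < b * Real.exp (ε * (t - s) / 2) := mul_pos hbpos hEt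
  have hsq : (b * Real.exp (ε * (t - s) / 2)) ^ 2 ≤ D t ^ 2 :=
    pow_le_pow_left₀ hbE.le hDt_ge 2
  have h1 : g t ≤ ((b * Real.exp (ε * (t - s) / 2)) ^ 2)⁻¹ := by
    rw [hgdef]
    exact inv_anti₀ (pow_pos hbE 2) hsq
  refine h1.trans_eq ?_
  rw [mul_pow, mul_inv]
  congr 1
  rw [← Real.exp_nat_mul, ← Real.exp_neg]
  norm_num
  ring_nf

/-- Nonlinear Gronwall-type comparison lemma for the differential inequality
`V' ≤ -ε V + q V^{3/2}` (inequality (63)). -/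
theorem gronwall_nonlinear_comparison
    (ε q T : ℝ) (hε : 0 < ε) (hq : 0 < q) (hT : 0 < T)
    (V V' : ℝ → ℝ)
    (hVc : ContinuousOn V (Set.Icc 0 T))
    (hVnn : ∀ t ∈ Set.Icc (0:ℝ) T, 0 ≤ V t)
    (hVd : ∀ t ∈ Set.Ioo (0:ℝ) T, HasDerivAt V (V' t) t)
    (hVineq : ∀ t ∈ Set.Ioo (0:ℝ) T, V' t ≤ -ε * V t + q * (V t) ^ ((3 : ℝ) / 2))
    (hsmall : Real.sqrt (V 0) < ε / q) :
    ∀ t ∈ Set.Icc (0:ℝ) T,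
      V t ≤ V 0 * Real.exp (-ε * t) / (1 - q / ε * Real.sqrt (V 0)) ^ 2 := by
  have hV0nn : 0 ≤ V 0 := hVnn 0 ⟨le_rfl, hT.le⟩
  have hs0nn : 0 ≤ Real.sqrt (V 0) := Real.sqrt_nonneg _
  have hqs : Real.sqrt (V 0) * q < ε := by
    have := (lt_div_iff₀ hq).mp hsmall; linarith
  have hk1 : q / ε * Real.sqrt (V 0) < 1 := by
    rw [div_mul_eq_mul_div, div_lt_one hε]; nlinarith
  have hk0 : 0 ≤ q / ε * Real.sqrt (V 0) := by positivity
  have hden : 0 < (1 - q / ε * Real.sqrt (V 0)) ^ 2 := by nlinarith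
  intro t ht
  rcases eq_or_lt_of_le ht.1 with h0t | h0t
  · -- t = 0
    rw [← h0t]
    rw [mul_zero, Real.exp_zero, mul_one, le_div_iff₀ hden]
    have h1 : (1 - q / ε * Real.sqrt (V 0)) ^ 2 ≤ 1 := by nlinarith
    exact mul_le_of_le_one_right hV0nn h1
  -- 0 < t
  set φ : ℝ → ℝ := fun s =>
    (((Real.sqrt (V s + s))⁻¹ - (q + s) / ε) ^ 2)⁻¹ * Real.exp (-(ε * (t - s))) with hφdef
  -- basic limits
  have hIccmem : Set.Icc (0:ℝ) T ∈ 𝓝[>] (0:ℝ) := Icc_mem_nhdsGT_of_mem ⟨le_rfl, hT⟩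
  have hVt : Tendsto V (𝓝[>] (0:ℝ)) (𝓝 (V 0)) :=
    (hVc 0 ⟨le_rfl, hT.le⟩).tendsto.mono_left (nhdsWithin_le_of_mem hIccmem)
  have hid : Tendsto (fun s : ℝ => s) (𝓝[>] (0:ℝ)) (𝓝 0) :=
    tendsto_id.mono_left nhdsWithin_le_nhds
  have hVV : Tendsto (fun s => V s + s) (𝓝[>] (0:ℝ)) (𝓝 (V 0)) := by
    simpa using hVt.add hid
  have hsqt : Tendsto (fun s => Real.sqrt (V s + s)) (𝓝[>] (0:ℝ)) (𝓝 (Real.sqrt (V 0))) :=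
    (Real.continuous_sqrt.tendsto (V 0)).comp hVV
  have hψ : Tendsto (fun s => Real.sqrt (V s + s) * (q + s)) (𝓝[>] (0:ℝ))
      (𝓝 (Real.sqrt (V 0) * q)) := by
    have h2 : Tendsto (fun s : ℝ => q + s) (𝓝[>] (0:ℝ)) (𝓝 q) := by
      simpa using tendsto_const_nhds.add hid
    simpa using hsqt.mul h2
  have hexp : Tendsto (fun s => Real.exp (-(ε * (t - s)))) (𝓝[>] (0:ℝ))
      (𝓝 (Real.exp (-(ε * t)))) := by
    have hcont : Continuous fun s : ℝ => Real.exp (-(ε * (t - s))) := by continuity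
    have := (hcont.tendsto 0).mono_left (nhdsWithin_le_nhds (s := Set.Ioi (0:ℝ)))
    simpa using this
  -- eventual bound : V t ≤ φ s
  have claimA : ∀ᶠ s in 𝓝[>] (0:ℝ), V t ≤ φ s := by
    have hev1 : ∀ᶠ s in 𝓝[>] (0:ℝ), s ∈ Set.Ioo (0:ℝ) t :=
      Filter.eventually_of_mem (Ioo_mem_nhdsGT_of_mem ⟨le_rfl, h0t⟩) fun x hx => hx
    have hev2 : ∀ᶠ s in 𝓝[>] (0:ℝ), Real.sqrt (V s + s) * (q + s) < ε :=
      hψ.eventually_lt_const hqs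
    have hev3 : ∀ᶠ s in 𝓝[>] (0:ℝ), s ∈ Set.Icc (0:ℝ) T :=
      Filter.eventually_of_mem hIccmem fun x hx => hx
    filter_upwards [hev1, hev2, hev3] with s hs1 hs2 hs3
    have hVs : 0 ≤ V s := hVnn s hs3
    have hc : 0 < V s + s := by linarith [hs1.1]
    have hscp : 0 < Real.sqrt (V s + s) := Real.sqrt_pos.mpr hc
    have hb : (q + s) / ε < (Real.sqrt (V s + s))⁻¹ := by
      rw [inv_eq_one_div, div_lt_div_iff₀ hε hscp]
      nlinarith [hs2]
    exact gronwall_key_aux ε q T hε hq V V' hVc hVd hVineq s hs1.1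
      (lt_of_lt_of_le hs1.2 ht.2) hb t ⟨hs1.2.le, ht.2⟩
  -- the limit of φ
  rcases eq_or_lt_of_le hV0nn with hV0 | hV0
  · -- V 0 = 0 : the bound is 0
    rw [← hV0, zero_mul, zero_div]
    refine ge_of_tendsto ?_ claimA
    have hsq0 : Tendsto (fun s => Real.sqrt (V s + s)) (𝓝[>] (0:ℝ)) (𝓝[>] (0:ℝ)) := by
      rw [tendsto_nhdsWithin_iff]
      constructor
      · rw [← hV0, Real.sqrt_zero] at hsqt; exact hsqt
      · filter_upwards [Filter.eventually_of_mem hIccmem fun x hx => hx,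
          Filter.eventually_of_mem (self_mem_nhdsWithin (s := Set.Ioi (0:ℝ)))
            fun x hx => hx] with s hs1 hs2
        exact Real.sqrt_pos.mpr (by have := hVnn s hs1; exact by linarith [Set.mem_Ioi.mp hs2])
    have hinvT : Tendsto (fun s => (Real.sqrt (V s + s))⁻¹) (𝓝[>] (0:ℝ)) atTop :=
      tendsto_inv_nhdsGT_zero.comp hsq0
    have hbT : Tendsto (fun s => (Real.sqrt (V s + s))⁻¹ - (q + s) / ε) (𝓝[>] (0:ℝ)) atTop := by
      have hgev : ∀ᶠ s in 𝓝[>] (0:ℝ), -((q + T) / ε) ≤ -((q + s) / ε) := by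
        filter_upwards [Filter.eventually_of_mem hIccmem fun x hx => hx] with s hs
        have : (q + s) / ε ≤ (q + T) / ε := by
          gcongr
          exact hs.2
        linarith
      have := tendsto_atTop_add_right_of_le' (𝓝[>] (0:ℝ)) (-((q + T) / ε)) hinvT hgev
      simpa [sub_eq_add_neg] using this
    have hb2 : Tendsto (fun s => ((Real.sqrt (V s + s))⁻¹ - (q + s) / ε) ^ 2)
        (𝓝[>] (0:ℝ)) atTop := by
      have := hbT.atTop_mul_atTop₀ hbT
      simpa [pow_two] using this
    have hinv2 : Tendsto (fun s => (((Real.sqrt (V s + s))⁻¹ - (q + s) / ε) ^ 2)⁻¹)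
        (𝓝[>] (0:ℝ)) (𝓝 0) := hb2.inv_tendsto_atTop
    have : Tendsto φ (𝓝[>] (0:ℝ)) (𝓝 (0 * Real.exp (-(ε * t)))) := hinv2.mul hexp
    simpa using this
  · -- V 0 > 0
    have hsqpos : 0 < Real.sqrt (V 0) := Real.sqrt_pos.mpr hV0
    set b0 : ℝ := (Real.sqrt (V 0))⁻¹ - q / ε with hb0def
    have hb0pos : 0 < b0 := by
      rw [hb0def, sub_pos, inv_eq_one_div, div_lt_div_iff₀ hε hsqpos]
      nlinarith
    have hbt : Tendsto (fun s => (Real.sqrt (V s + s))⁻¹ - (q + s) / ε)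
        (𝓝[>] (0:ℝ)) (𝓝 b0) := by
      have h1 : Tendsto (fun s => (Real.sqrt (V s + s))⁻¹) (𝓝[>] (0:ℝ))
          (𝓝 ((Real.sqrt (V 0))⁻¹)) := hsqt.inv₀ hsqpos.ne'
      have h2 : Tendsto (fun s : ℝ => (q + s) / ε) (𝓝[>] (0:ℝ)) (𝓝 (q / ε)) := by
        have : Tendsto (fun s : ℝ => q + s) (𝓝[>] (0:ℝ)) (𝓝 q) := by
          simpa using tendsto_const_nhds.add hid
        simpa using this.div_const ε
      exact h1.sub h2
    have hφt : Tendsto φ (𝓝[>] (0:ℝ)) (𝓝 ((b0 ^ 2)⁻¹ * Real.exp (-(ε * t)))) :=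
      ((hbt.pow 2).inv₀ (pow_ne_zero 2 hb0pos.ne')).mul hexp
    have hL : (b0 ^ 2)⁻¹ * Real.exp (-(ε * t))
        = V 0 * Real.exp (-ε * t) / (1 - q / ε * Real.sqrt (V 0)) ^ 2 := by
      have hb0eq : b0 = (1 - q / ε * Real.sqrt (V 0)) / Real.sqrt (V 0) := by
        rw [hb0def]
        field_simp
      rw [hb0eq, div_pow, inv_div, Real.sq_sqrt hV0nn, neg_mul]
      ring
    rw [← hL]
    exact ge_of_tendsto hφt claimA
end
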